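/- arXiv:0811.3830 — 5 statements merged into one kernel-verified Lean document; each statement's English description precedes it below -/
import Mathlib

section
/- Let K be a field, n a positive integer, and L, L' subgroups (lattices) of ℤ^n. Then L ⊆ L' if and only if the lattice ideal I_L is contained in the lattice ideal I_{L'} in K[x_1,…,x_n]. -/
open MvPolynomial

/-- A polynomial is `L`-homogeneous if the difference of any two exponent vectors
occurring in its support lies in `L`. -/
def IsLHomog {n : ℕ} {K : Type*} [CommSemiring K] (L : Set (Fin n → ℤ))
    (F : MvPolynomial (Fin n) K) : Prop :=
  ∀ u ∈ F.support, ∀ v ∈ F.support, (fun j => ((u j : ℤ) - (v j : ℤ))) ∈ L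

/-- An ideal is `L`-homogeneous if it is generated by `L`-homogeneous polynomials. -/
def IsLHomogIdeal {n : ℕ} {K : Type*} [CommSemiring K] (L : Set (Fin n → ℤ))
    (J : Ideal (MvPolynomial (Fin n) K)) : Prop :=
  ∃ S : Set (MvPolynomial (Fin n) K), (∀ F ∈ S, IsLHomog L F) ∧ J = Ideal.span S

/-- The positive part `u⁺` of an integer vector, as an exponent vector. -/
noncomputable def posPart {n : ℕ} (u : Fin n → ℤ) : Fin n →₀ ℕ :=
  Finsupp.equivFunOnFinite.symm (fun j => (u j).toNat)

/-- The lattice ideal `I_L = ⟨x^{u⁺} - x^{u⁻} : u ∈ L⟩`. -/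
noncomputable def latticeIdeal {n : ℕ} (K : Type*) [CommRing K] (L : AddSubgroup (Fin n → ℤ)) :
    Ideal (MvPolynomial (Fin n) K) :=
  Ideal.span {F | ∃ u ∈ L, F = monomial (posPart u) (1 : K) - monomial (posPart (-u)) (1 : K)}

/-- The saturation of a lattice `L ⊆ ℤⁿ`. -/
def satSet {n : ℕ} (L : AddSubgroup (Fin n → ℤ)) : Set (Fin n → ℤ) :=
  {α | ∃ d : ℤ, d ≠ 0 ∧ d • α ∈ L}

/-- The arithmetical rank of an ideal. -/
noncomputable def ara {R : Type*} [CommSemiring R] (J : Ideal R) : ℕ :=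
  sInf {s | ∃ F : Fin s → R, (∀ i, F i ∈ J) ∧ J.radical = (Ideal.span (Set.range F)).radical}

/-- The `L`-homogeneous arithmetical rank of an ideal. -/
noncomputable def araH {n : ℕ} {K : Type*} [CommSemiring K] (L : Set (Fin n → ℤ))
    (J : Ideal (MvPolynomial (Fin n) K)) : ℕ :=
  sInf {s | ∃ F : Fin s → MvPolynomial (Fin n) K, (∀ i, IsLHomog L (F i)) ∧
    J.radical = (Ideal.span (Set.range F)).radical}


section Aux

variable {n : ℕ} {K : Type*} [Field K]

/-- The quotient map hom to the group algebra of the quotient. -/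
noncomputable def latPhi (K : Type*) [Field K] {n : ℕ} (L' : AddSubgroup (Fin n → ℤ)) :
    MvPolynomial (Fin n) K →+* AddMonoidAlgebra K ((Fin n → ℤ) ⧸ L') :=
  (MvPolynomial.aeval fun i => AddMonoidAlgebra.single
    ((QuotientAddGroup.mk (Pi.single i 1)) : (Fin n → ℤ) ⧸ L') (1 : K)).toRingHom

lemma sum_nsmul_single (β : Fin n →₀ ℕ) :
    (∑ i : Fin n, (β i) • (Pi.single i 1 : Fin n → ℤ)) = fun j => (β j : ℤ) := by
  funext j
  simp [Finset.sum_apply, Pi.single_apply]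

lemma latPhi_monomial (L' : AddSubgroup (Fin n → ℤ)) (β : Fin n →₀ ℕ) :
    latPhi K L' (MvPolynomial.monomial β (1 : K)) =
      AddMonoidAlgebra.single (QuotientAddGroup.mk (fun j => (β j : ℤ))) 1 := by
  classical
  rw [latPhi]
  simp only [AlgHom.toRingHom_eq_coe, RingHom.coe_coe, MvPolynomial.aeval_monomial, map_one,
    one_mul]
  rw [Finsupp.prod_fintype _ _ (fun i => by simp [AddMonoidAlgebra.one_def])]
  have h1 : ∀ i : Fin n, (AddMonoidAlgebra.single
      ((QuotientAddGroup.mk (Pi.single i 1)) : (Fin n → ℤ) ⧸ L') (1 : K)) ^ (β i)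
      = AddMonoidAlgebra.single ((β i) • (QuotientAddGroup.mk (Pi.single i 1))) 1 := by
    intro i
    rw [AddMonoidAlgebra.single_pow, one_pow]
  simp only [h1]
  rw [AddMonoidAlgebra.prod_single]
  congr 1
  · rw [← sum_nsmul_single β]
    have hc : ∀ x : Fin n → ℤ, ((x : (Fin n → ℤ) ⧸ L')) = QuotientAddGroup.mk' L' x :=
      fun _ => rfl
    simp only [hc, ← map_nsmul, ← map_sum]
  · simp

lemma latPhi_gen (L' : AddSubgroup (Fin n → ℤ)) (u : Fin n → ℤ) (hu : u ∈ L') :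
    latPhi K L' (MvPolynomial.monomial (posPart u) (1 : K)
      - MvPolynomial.monomial (posPart (-u)) (1 : K)) = 0 := by
  rw [map_sub, latPhi_monomial, latPhi_monomial]
  have : (QuotientAddGroup.mk (fun j => ((_root_.posPart u j : ℤ))) : (Fin n → ℤ) ⧸ L')
      = QuotientAddGroup.mk (fun j => ((_root_.posPart (-u) j : ℤ))) := by
    rw [QuotientAddGroup.eq_iff_sub_mem]
    convert hu using 1
    funext j
    simp only [Pi.sub_apply, _root_.posPart, Finsupp.coe_equivFunOnFinite_symm,
      Pi.neg_apply]
    omega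
  rw [this, sub_self]

end Aux

/-- `L ⊆ L'` iff the lattice ideal `I_L` is contained in `I_{L'}`. -/
theorem stmt1 {K : Type*} [Field K] {n : ℕ} (hn : 0 < n) (L L' : AddSubgroup (Fin n → ℤ)) :
    L ≤ L' ↔ latticeIdeal K L ≤ latticeIdeal K L' := by
  constructor
  · intro h
    apply Ideal.span_mono
    rintro F ⟨u, hu, rfl⟩
    exact ⟨u, h hu, rfl⟩
  · intro h u hu
    have hmem : MvPolynomial.monomial (posPart u) (1 : K)
        - MvPolynomial.monomial (posPart (-u)) (1 : K) ∈ latticeIdeal K L' :=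
      h (Ideal.subset_span ⟨u, hu, rfl⟩)
    have hker : latticeIdeal K L' ≤ RingHom.ker (latPhi K L') := by
      rw [latticeIdeal, Ideal.span_le]
      rintro F ⟨v, hv, rfl⟩
      exact latPhi_gen L' v hv
    have h0 := hker hmem
    rw [RingHom.mem_ker, map_sub, latPhi_monomial, latPhi_monomial, sub_eq_zero] at h0
    have hq : (QuotientAddGroup.mk (fun j => ((_root_.posPart u j : ℤ))) : (Fin n → ℤ) ⧸ L')
        = QuotientAddGroup.mk (fun j => ((_root_.posPart (-u) j : ℤ))) := by
      by_contra hne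
      rcases AddMonoidAlgebra.single_inj.mp h0 with ⟨h1, _⟩ | ⟨h1, _⟩
      · exact hne h1
      · exact one_ne_zero h1
    rw [QuotientAddGroup.eq_iff_sub_mem] at hq
    convert hq using 1
    funext j
    simp only [Pi.sub_apply, _root_.posPart, Finsupp.coe_equivFunOnFinite_symm,
      Pi.neg_apply]
    omega
end

section
/- Let K be a field, n a positive integer, and L a subgroup (lattice) of ℤ^n. For every u ∈ ℤ^n, the binomial x^{u⁺} − x^{u⁻} belongs to the lattice ideal I_L if and only if u ∈ L. -/
open MvPolynomial

noncomputable def latmap {n : ℕ} (K : Type*) [CommRing K] (L : AddSubgroup (Fin n → ℤ)) :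
    MvPolynomial (Fin n) K →ₐ[K] AddMonoidAlgebra K ((Fin n → ℤ) ⧸ L) :=
  aeval (fun i => AddMonoidAlgebra.single (QuotientAddGroup.mk (Pi.single i 1)) 1)

lemma latmap_monomial {n : ℕ} {K : Type*} [CommRing K] (L : AddSubgroup (Fin n → ℤ))
    (β : Fin n →₀ ℕ) :
    latmap K L (monomial β (1 : K)) =
      AddMonoidAlgebra.single (QuotientAddGroup.mk (fun j => (β j : ℤ))) 1 := by
  rw [latmap, aeval_monomial, map_one, one_mul,
    Finsupp.prod_fintype _ _ (fun i => pow_zero _)]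
  simp only [AddMonoidAlgebra.single_pow, one_pow]
  rw [AddMonoidAlgebra.prod_single, Finset.prod_const_one]
  congr 1
  have : (∑ i, β i • QuotientAddGroup.mk (s := L) (Pi.single i (1:ℤ))) =
      QuotientAddGroup.mk (∑ i, β i • Pi.single i (1:ℤ)) := by
    rw [QuotientAddGroup.mk_sum]
    simp only [QuotientAddGroup.mk_nsmul]
  rw [this]
  congr 1
  funext j
  simp [Finset.sum_apply, Pi.single_apply]

lemma posPartSub {n : ℕ} (w : Fin n → ℤ) :
    (fun j => ((_root_.posPart w) j : ℤ)) - (fun j => ((_root_.posPart (-w)) j : ℤ)) = w := by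
  funext j
  simp only [_root_.posPart, Finsupp.coe_equivFunOnFinite_symm, Pi.sub_apply, Pi.neg_apply]
  omega

lemma latmap_binomial {n : ℕ} {K : Type*} [CommRing K] (L : AddSubgroup (Fin n → ℤ))
    (w : Fin n → ℤ) (hw : w ∈ L) :
    latmap K L (monomial (_root_.posPart w) (1 : K) - monomial (_root_.posPart (-w)) (1 : K)) = 0 := by
  rw [map_sub, latmap_monomial, latmap_monomial, sub_eq_zero]
  congr 1
  rw [QuotientAddGroup.eq]
  have := posPartSub w
  have h : -(fun j => ((_root_.posPart w) j : ℤ)) + (fun j => ((_root_.posPart (-w)) j : ℤ)) = -w := by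
    rw [neg_add_eq_sub, ← neg_sub, this]
  rw [h]
  exact neg_mem hw

/-- the binomial `x^{u⁺} - x^{u⁻}` belongs to `I_L` iff `u ∈ L`. -/
theorem stmt2 {K : Type*} [Field K] {n : ℕ} (hn : 0 < n) (L : AddSubgroup (Fin n → ℤ))
    (u : Fin n → ℤ) :
    (monomial (posPart u) (1 : K) - monomial (posPart (-u)) (1 : K)) ∈ latticeIdeal K L ↔
      u ∈ L := by

  constructor
  · intro h
    have hker : latticeIdeal K L ≤ RingHom.ker (latmap K L).toRingHom := by
      rw [latticeIdeal, Ideal.span_le]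
      rintro F ⟨w, hw, rfl⟩
      exact latmap_binomial L w hw
    have h0 := hker h
    rw [RingHom.mem_ker, AlgHom.toRingHom_eq_coe, RingHom.coe_coe, map_sub,
      latmap_monomial, latmap_monomial, sub_eq_zero] at h0
    have heq : QuotientAddGroup.mk (s := L) (fun j => ((_root_.posPart u) j : ℤ)) =
        QuotientAddGroup.mk (fun j => ((_root_.posPart (-u)) j : ℤ)) := by
      exact (AddMonoidAlgebra.single_left_inj one_ne_zero).mp h0
    rw [QuotientAddGroup.eq] at heq
    have h2 : (-(fun j => ((_root_.posPart u) j : ℤ)) + fun j => ((_root_.posPart (-u)) j : ℤ)) = -u := by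
      rw [neg_add_eq_sub, ← neg_sub, posPartSub]
    rw [h2] at heq
    simpa using neg_mem heq
  · intro hu
    exact Ideal.subset_span ⟨u, hu, rfl⟩
end

section
/- Let n be a positive integer and L a subgroup (lattice) of ℤ^n. Then L ∩ ℕ^n = {0} (i.e. the grading of K[x_1,…,x_n] by ℤ^n/L is positive) if and only if there exist positive integers m_1,…,m_n such that m_1u_1+⋯+m_nu_n = 0 for every u = (u_1,…,u_n) ∈ L. -/
open MvPolynomial

set_option linter.unusedSectionVars false

open Matrix

namespace Stmt7Aux

noncomputable def qr {n : ℕ} (x : Fin n → ℚ) : Fin n → ℝ := fun i => (x i : ℝ)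

section perp
variable {n : ℕ} {F : Type} [Field F] [LinearOrder F] [IsStrictOrderedRing F]

def perp {κ : Type} (v : κ → (Fin n → F)) : Submodule F (Fin n → F) where
  carrier := {x | ∀ j, v j ⬝ᵥ x = 0}
  add_mem' := by intro a b ha hb j; rw [dotProduct_add, ha j, hb j, add_zero]
  zero_mem' := by intro j; simp
  smul_mem' := by intro c x hx j; rw [dotProduct_smul, hx j, smul_eq_mul, mul_zero]

lemma mem_perp {κ : Type} {v : κ → (Fin n → F)} {x} : x ∈ perp v ↔ ∀ j, v j ⬝ᵥ x = 0 :=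
  Iff.rfl

variable {κ : Type} [Fintype κ] [DecidableEq κ]

def gram (v : κ → (Fin n → F)) : Matrix κ κ F := Matrix.of fun i j => v i ⬝ᵥ v j

lemma gram_eq (v : κ → (Fin n → F)) : gram v = Matrix.of v * (Matrix.of v)ᵀ := by
  ext i j; simp [gram, Matrix.mul_apply, dotProduct]

lemma gram_mulVec (v : κ → (Fin n → F)) (a : κ → F) (i : κ) :
    (gram v *ᵥ a) i = v i ⬝ᵥ (∑ j, a j • v j) := by
  simp only [gram, mulVec, dotProduct, of_apply, Finset.sum_apply, Pi.smul_apply,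
    smul_eq_mul, Finset.mul_sum, Finset.sum_mul]
  rw [Finset.sum_comm]
  exact Finset.sum_congr rfl fun j _ => Finset.sum_congr rfl fun t _ => by ring

lemma dotProduct_sum' {κ : Type} (w : Fin n → F) (s : Finset κ) (f : κ → (Fin n → F)) :
    w ⬝ᵥ (∑ j ∈ s, f j) = ∑ j ∈ s, w ⬝ᵥ f j := by
  simp only [dotProduct, Finset.sum_apply, Finset.mul_sum]
  exact Finset.sum_comm

lemma li_iff_gram_det {v : κ → (Fin n → F)} :
    LinearIndependent F v ↔ (gram v).det ≠ 0 := by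
  constructor
  · intro hli hdet
    obtain ⟨a, ha, h0⟩ := (Matrix.exists_mulVec_eq_zero_iff (M := gram v)).mpr hdet
    have hvz : ∀ i, v i ⬝ᵥ (∑ j, a j • v j) = 0 := fun i => by
      rw [← gram_mulVec, h0]; rfl
    have hz : (∑ j, a j • v j) = 0 := by
      have hdz : (∑ j, a j • v j) ⬝ᵥ (∑ j, a j • v j) = 0 := by
        rw [dotProduct_sum']
        refine Finset.sum_eq_zero fun j _ => ?_
        rw [dotProduct_comm, smul_dotProduct, hvz j, smul_zero]
      exact dotProduct_self_eq_zero.mp hdz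
    exact ha (funext fun i => Fintype.linearIndependent_iff.mp hli a hz i)
  · intro hdet
    rw [Fintype.linearIndependent_iff]
    intro g hg i
    have h0 : gram v *ᵥ g = 0 := by
      funext i
      rw [gram_mulVec, hg, dotProduct_zero]; rfl
    have : g = 0 := by
      have := congrArg (fun w => (gram v)⁻¹ *ᵥ w) h0
      simpa [mulVec_mulVec, nonsing_inv_mul _ (isUnit_iff_ne_zero.mpr hdet)] using this
    exact congrFun this i

lemma surj_of_gram {v : κ → (Fin n → F)} (h : LinearIndependent F v) :
    Function.Surjective (Matrix.of v).mulVecLin := by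
  intro t
  have hdet := li_iff_gram_det.mp h
  refine ⟨(Matrix.of v)ᵀ *ᵥ ((gram v)⁻¹ *ᵥ t), ?_⟩
  simp only [mulVecLin_apply, mulVec_mulVec, ← Matrix.mul_assoc, ← gram_eq,
    mul_nonsing_inv _ (isUnit_iff_ne_zero.mpr hdet), one_mulVec]

lemma perp_eq_ker (v : κ → (Fin n → F)) :
    perp v = LinearMap.ker (Matrix.of v).mulVecLin := by
  ext x
  simp only [mem_perp, LinearMap.mem_ker, mulVecLin_apply, funext_iff]
  rfl

lemma finrank_perp {v : κ → (Fin n → F)} (h : LinearIndependent F v) :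
    Module.finrank F (perp v) + Fintype.card κ = n := by
  have := LinearMap.finrank_range_add_finrank_ker (Matrix.of v).mulVecLin
  rw [LinearMap.range_eq_top.mpr (surj_of_gram h), finrank_top, Module.finrank_pi,
    Module.finrank_pi, ← perp_eq_ker] at this
  rw [add_comm]
  simpa [Fintype.card_fin] using this

/-- the linear functional `z ↦ z ⬝ᵥ x`. -/
def dotL (x : Fin n → F) : (Fin n → F) →ₗ[F] F where
  toFun z := z ⬝ᵥ x
  map_add' a b := add_dotProduct a b x
  map_smul' c a := smul_dotProduct c a x

lemma mem_perp_iff_span {κ : Type} {v : κ → (Fin n → F)} {x : Fin n → F} :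
    x ∈ perp v ↔ ∀ z ∈ Submodule.span F (Set.range v), z ⬝ᵥ x = 0 := by
  constructor
  · intro h z hz
    have hle : Submodule.span F (Set.range v) ≤ LinearMap.ker (dotL x) := by
      rw [Submodule.span_le]
      rintro _ ⟨j, rfl⟩
      exact h j
    exact hle hz
  · exact fun h j => h _ (Submodule.subset_span (Set.mem_range_self j))

lemma perp_span_congr {κ κ' : Type} {v : κ → (Fin n → F)} {w : κ' → (Fin n → F)}
    (h : Submodule.span F (Set.range v) = Submodule.span F (Set.range w)) :
    perp v = perp w := by
  ext x
  rw [mem_perp_iff_span, mem_perp_iff_span, h]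

end perp

section cast
variable {n : ℕ}

lemma qr_dot (x y : Fin n → ℚ) : qr x ⬝ᵥ qr y = ((x ⬝ᵥ y : ℚ) : ℝ) := by
  simp only [qr, dotProduct]
  push_cast
  rfl

lemma qr_mem_span {κ : Type} [Fintype κ] (u : κ → (Fin n → ℚ)) {x : Fin n → ℚ}
    (hx : x ∈ Submodule.span ℚ (Set.range u)) :
    qr x ∈ Submodule.span ℝ (Set.range fun j => qr (u j)) := by
  obtain ⟨a, rfl⟩ := (Submodule.mem_span_range_iff_exists_fun ℚ).mp hx
  refine (Submodule.mem_span_range_iff_exists_fun ℝ).mpr ⟨fun j => (a j : ℝ), funext fun i => ?_⟩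
  simp only [qr, Finset.sum_apply, Pi.smul_apply, smul_eq_mul]
  push_cast
  rfl

lemma li_qr {κ : Type} [Fintype κ] {v : κ → (Fin n → ℚ)} (h : LinearIndependent ℚ v) :
    LinearIndependent ℝ (fun j => qr (v j)) := by
  classical
  rw [li_iff_gram_det] at h ⊢
  have hg : gram (fun j => qr (v j)) = (Rat.castHom ℝ).mapMatrix (gram v) := by
    ext i j
    simp [gram, qr_dot]
  rw [hg, ← RingHom.map_det]
  intro h0
  exact h ((map_eq_zero _).mp h0)

/-- a family forming a basis of a subspace of `ℚ^n`. -/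
noncomputable def bfam (W : Submodule ℚ (Fin n → ℚ)) :
    Fin (Module.finrank ℚ W) → (Fin n → ℚ) :=
  fun j => ((Module.finBasis ℚ W) j : Fin n → ℚ)

lemma bfam_li (W : Submodule ℚ (Fin n → ℚ)) : LinearIndependent ℚ (bfam W) :=
  (Module.finBasis ℚ W).linearIndependent.map' W.subtype (Submodule.ker_subtype W)

lemma bfam_span (W : Submodule ℚ (Fin n → ℚ)) :
    Submodule.span ℚ (Set.range (bfam W)) = W := by
  have : Set.range (bfam W) = W.subtype '' Set.range (Module.finBasis ℚ W) := by
    rw [← Set.range_comp]; rfl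
  rw [this, ← Submodule.map_span, Module.Basis.span_eq, Submodule.map_top, Submodule.range_subtype]

lemma bfam_mem (W : Submodule ℚ (Fin n → ℚ)) (j) : bfam W j ∈ W :=
  (Module.finBasis ℚ W j).2

/-- CORE, linearly independent case -/
lemma perpR_eq_span {κ : Type} [Fintype κ] [DecidableEq κ] {v : κ → (Fin n → ℚ)}
    (hv : LinearIndependent ℚ v) :
    perp (fun j => qr (v j)) = Submodule.span ℝ (qr '' (perp v : Set (Fin n → ℚ))) := by
  have h1 : Module.finrank ℝ (perp fun j => qr (v j)) + Fintype.card κ = n :=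
    finrank_perp (li_qr hv)
  have h2 : Module.finrank ℚ (perp v) + Fintype.card κ = n := finrank_perp hv
  have hspanb : Submodule.span ℝ (qr '' (perp v : Set (Fin n → ℚ)))
      = Submodule.span ℝ (Set.range fun j => qr (bfam (perp v) j)) := by
    apply le_antisymm
    · rw [Submodule.span_le]
      rintro _ ⟨x, hx, rfl⟩
      rw [← bfam_span (perp v)] at hx
      exact qr_mem_span _ hx
    · rw [Submodule.span_le]
      rintro _ ⟨j, rfl⟩
      exact Submodule.subset_span ⟨bfam (perp v) j, bfam_mem _ j, rfl⟩
  have h3 : Module.finrank ℝ (Submodule.span ℝ (Set.range fun j => qr (bfam (perp v) j)))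
      = Module.finrank ℚ (perp v) := by
    rw [finrank_span_eq_card (li_qr (bfam_li (perp v))), Fintype.card_fin]
  have hle : Submodule.span ℝ (qr '' (perp v : Set (Fin n → ℚ))) ≤ perp fun j => qr (v j) := by
    rw [Submodule.span_le]
    rintro _ ⟨x, hx, rfl⟩
    intro j
    rw [qr_dot, hx j]
    exact Rat.cast_zero
  refine (Submodule.eq_of_le_of_finrank_le hle ?_).symm
  rw [hspanb, h3]
  omega

/-- CORE, general case -/
lemma perpR_eq_span' {κ : Type} [Fintype κ] [DecidableEq κ] (c : κ → (Fin n → ℚ)) :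
    perp (fun j => qr (c j)) = Submodule.span ℝ (qr '' (perp c : Set (Fin n → ℚ))) := by
  set W := Submodule.span ℚ (Set.range c) with hW
  have h1 : perp c = perp (bfam W) := perp_span_congr (by rw [bfam_span])
  have h2 : perp (fun j => qr (c j)) = perp (fun j => qr (bfam W j)) := by
    apply perp_span_congr
    apply le_antisymm
    · rw [Submodule.span_le]
      rintro _ ⟨j, rfl⟩
      exact qr_mem_span _ (by rw [bfam_span]; exact Submodule.subset_span (Set.mem_range_self j))
    · rw [Submodule.span_le]
      rintro _ ⟨j, rfl⟩
      exact qr_mem_span _ (hW ▸ bfam_mem W j)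
  rw [h2, h1, perpR_eq_span (bfam_li W)]

/-- double perp over ℚ -/
lemma perp_perp {κ : Type} [Fintype κ] [DecidableEq κ] (c : κ → (Fin n → ℚ)) :
    perp (bfam (perp c)) = Submodule.span ℚ (Set.range c) := by
  set W := Submodule.span ℚ (Set.range c) with hW
  have h0 : perp c = perp (bfam W) := perp_span_congr (by rw [bfam_span])
  have h1 : Module.finrank ℚ (perp (bfam W)) + Module.finrank ℚ W = n := by
    have := finrank_perp (bfam_li W)
    rwa [Fintype.card_fin] at this
  have h2 : Module.finrank ℚ (perp (bfam (perp c))) + Module.finrank ℚ (perp c) = n := by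
    have := finrank_perp (bfam_li (perp c))
    rwa [Fintype.card_fin] at this
  have hle : W ≤ perp (bfam (perp c)) := by
    rw [← bfam_span W, Submodule.span_le]
    rintro _ ⟨i, rfl⟩
    intro j
    have hj := bfam_mem (perp c) j
    exact (dotProduct_comm _ _).trans
      (mem_perp_iff_span.mp hj (bfam W i) (bfam_mem W i))
  have hrank : Module.finrank ℚ (perp (bfam (perp c))) = Module.finrank ℚ W := by
    rw [← h0] at h1
    omega
  exact (Submodule.eq_of_le_of_finrank_le hle (le_of_eq hrank)).symm

lemma qr_zero : qr (0 : Fin n → ℚ) = 0 := funext fun i => Rat.cast_zero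

lemma qr_single (i : Fin n) : qr (Pi.single i (1 : ℚ)) = Pi.single i (1 : ℝ) := by
  funext j
  simp only [qr, Pi.single_apply]
  split <;> simp

lemma span_qr_image (W : Submodule ℚ (Fin n → ℚ)) :
    Submodule.span ℝ (qr '' (W : Set (Fin n → ℚ)))
      = Submodule.span ℝ (Set.range fun j => qr (bfam W j)) := by
  apply le_antisymm
  · rw [Submodule.span_le]
    rintro _ ⟨x, hx, rfl⟩
    rw [← bfam_span W] at hx
    exact qr_mem_span _ hx
  · rw [Submodule.span_le]
    rintro _ ⟨j, rfl⟩
    exact Submodule.subset_span ⟨bfam W j, bfam_mem _ j, rfl⟩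

lemma real_nonneg_zero (VQ : Submodule ℚ (Fin n → ℚ))
    (hQ : ∀ v ∈ VQ, (∀ i, 0 ≤ v i) → v = 0) :
    ∀ x ∈ Submodule.span ℝ (qr '' (VQ : Set (Fin n → ℚ))), (∀ i, 0 ≤ x i) → x = 0 := by
  classical
  set g := bfam VQ with hg
  set PQ := perp g with hPQdef
  set b := bfam PQ with hb
  have hFb : perp b = VQ := by rw [hb, hPQdef, perp_perp g, hg, bfam_span]
  have hVR : Submodule.span ℝ (qr '' (VQ : Set (Fin n → ℚ))) = perp (fun j => qr (b j)) := by
    rw [perpR_eq_span' b, hFb]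
  suffices H : ∀ t : Finset (Fin n), ∀ x ∈ perp (fun j => qr (b j)),
      (∀ i, 0 ≤ x i) → (∀ i ∉ t, x i = 0) → x = 0 by
    intro x hx hpos
    exact H Finset.univ x (hVR ▸ hx) hpos (fun i hi => absurd (Finset.mem_univ i) hi)
  intro t
  induction t using Finset.strongInduction with
  | _ t IH =>
    intro x hx hpos hsupp
    by_cases hx0 : x = 0
    · exact hx0
    set S := t.filter (fun i => x i ≠ 0) with hS
    by_cases hSt : S = t
    swap
    · refine IH S (Finset.ssubset_iff_subset_ne.mpr ⟨Finset.filter_subset _ _, hSt⟩) x hx hpos ?_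
      intro i hi
      by_cases hit : i ∈ t
      · by_contra hxi
        exact hi (Finset.mem_filter.mpr ⟨hit, hxi⟩)
      · exact hsupp i hit
    have hxt : ∀ i ∈ t, 0 < x i := by
      intro i hit
      have : i ∈ S := hSt ▸ hit
      exact lt_of_le_of_ne (hpos i) (Ne.symm (Finset.mem_filter.mp this).2)
    set fam : (Fin (Module.finrank ℚ PQ) ⊕ {i : Fin n // i ∉ t}) → (Fin n → ℚ) :=
      Sum.elim b (fun i => Pi.single i.1 1) with hfam
    have hxfam : x ∈ perp (fun j => qr (fam j)) := by
      intro j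
      rcases j with j | i
      · exact hx j
      · show qr (Pi.single i.1 1) ⬝ᵥ x = 0
        rw [qr_single, single_dotProduct, one_mul]
        exact hsupp i.1 i.2
    rw [perpR_eq_span' fam] at hxfam
    by_cases hbot : perp fam = ⊥
    · rw [hbot] at hxfam
      simp only [Submodule.bot_coe, Set.image_singleton, qr_zero,
        Submodule.span_zero_singleton, Submodule.mem_bot] at hxfam
      exact hxfam
    obtain ⟨y, hy, hy0⟩ := (Submodule.ne_bot_iff _).mp hbot
    exfalso
    have hyVQ : y ∈ VQ := hFb ▸ (fun j => hy (Sum.inl j))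
    have hysupp : ∀ i ∉ t, y i = 0 := by
      intro i hi
      have := hy (Sum.inr ⟨i, hi⟩)
      show y i = 0
      simpa [hfam, single_dotProduct] using this
    have hyneg : ∃ i, y i < 0 := by
      by_contra hc
      push_neg at hc
      exact hy0 (hQ y hyVQ hc)
    obtain ⟨i₁, hi₁⟩ := hyneg
    have hi₁t : i₁ ∈ t := by
      by_contra hc
      rw [hysupp i₁ hc] at hi₁
      exact absurd hi₁ (lt_irrefl 0)
    set Neg := t.filter (fun i => y i < 0) with hNeg
    obtain ⟨is, hisNeg, hmin⟩ := Neg.exists_min_image (fun i => x i / (-(y i : ℝ)))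
      ⟨i₁, Finset.mem_filter.mpr ⟨hi₁t, hi₁⟩⟩
    have hist : is ∈ t := (Finset.mem_filter.mp hisNeg).1
    have hisy : y is < 0 := (Finset.mem_filter.mp hisNeg).2
    have hisyR : (0 : ℝ) < -(y is : ℝ) := by
      rw [neg_pos]
      exact_mod_cast hisy
    set t₀ := x is / (-(y is : ℝ)) with ht₀def
    have ht₀ : 0 < t₀ := div_pos (hxt is hist) hisyR
    set w := x + t₀ • qr y with hw
    have hqy : qr y ∈ perp (fun j => qr (b j)) := by
      intro j
      rw [qr_dot]
      have : b j ⬝ᵥ y = 0 := hy (Sum.inl j)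
      rw [this]
      exact Rat.cast_zero
    have hwperp : w ∈ perp (fun j => qr (b j)) :=
      (perp fun j => qr (b j)).add_mem hx ((perp fun j => qr (b j)).smul_mem t₀ hqy)
    have hwi : ∀ i, w i = x i + t₀ * (y i : ℝ) := fun i => rfl
    have hwpos : ∀ i, 0 ≤ w i := by
      intro i
      rw [hwi]
      rcases le_or_gt 0 (y i) with hyi | hyi
      · have : (0 : ℝ) ≤ (y i : ℝ) := by exact_mod_cast hyi
        have := mul_nonneg ht₀.le this
        linarith [hpos i]
      · have hit : i ∈ t := by
          by_contra hc
          rw [hysupp i hc] at hyi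
          exact absurd hyi (lt_irrefl 0)
        have hiNeg : i ∈ Neg := Finset.mem_filter.mpr ⟨hit, hyi⟩
        have hyiR : (0 : ℝ) < -(y i : ℝ) := by
          rw [neg_pos]; exact_mod_cast hyi
        have hmle : t₀ * (-(y i : ℝ)) ≤ x i := (le_div_iff₀ hyiR).mp (hmin i hiNeg)
        linarith
    have hwis : w is = 0 := by
      rw [hwi, ht₀def]
      have hyne : (y is : ℝ) ≠ 0 := by exact_mod_cast hisy.ne
      rw [div_mul_eq_mul_div, div_neg, mul_div_assoc, div_self hyne]; ring
    have hwsupp : ∀ i ∉ t.erase is, w i = 0 := by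
      intro i hi
      by_cases hit : i ∈ t
      · have heq : i = is := by
          by_contra hne
          exact hi (Finset.mem_erase.mpr ⟨hne, hit⟩)
        rw [heq]
        exact hwis
      · rw [hwi i, hsupp i hit, hysupp i hit]
        simp
    have hwz : w = 0 := IH (t.erase is) (Finset.erase_ssubset hist) w hwperp hwpos hwsupp
    have hxy : ∀ i, x i = t₀ * (-(y i : ℝ)) := by
      intro i
      have h := congrFun hwz i
      rw [hwi i, Pi.zero_apply] at h
      linarith
    have hnegy : ∀ i, 0 ≤ (-y) i := by
      intro i
      have h1 : (0:ℝ) ≤ t₀ * (-(y i : ℝ)) := by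
        rw [← hxy i]
        exact hpos i
      have h2 : (0:ℝ) ≤ -(y i : ℝ) := by nlinarith [h1, ht₀]
      show 0 ≤ -(y i)
      have : ((-(y i) : ℚ) : ℝ) = -(y i : ℝ) := by push_cast; ring
      exact_mod_cast this ▸ h2
    exact hy0 (neg_eq_zero.mp (hQ (-y) (neg_mem hyVQ) hnegy))

lemma exists_neg_functional (VQ : Submodule ℚ (Fin n → ℚ))
    (hQ : ∀ v ∈ VQ, (∀ i, 0 ≤ v i) → v = 0) :
    ∃ f : (Fin n → ℝ) →L[ℝ] ℝ, (∀ i, f (Pi.single i 1) < 0) ∧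
      ∀ x ∈ Submodule.span ℝ (qr '' (VQ : Set (Fin n → ℚ))), f x = 0 := by
  set VR := Submodule.span ℝ (qr '' (VQ : Set (Fin n → ℚ))) with hVRdef
  have hdisj : Disjoint (stdSimplex ℝ (Fin n)) (VR : Set (Fin n → ℝ)) := by
    rw [Set.disjoint_left]
    intro a ha haV
    have ha0 := real_nonneg_zero VQ hQ a haV ha.1
    have hsum := ha.2
    rw [ha0] at hsum
    simp at hsum
  have hclosed : IsClosed (VR : Set (Fin n → ℝ)) := Submodule.closed_of_finiteDimensional VR
  obtain ⟨f, u, v, h1, h2, h3⟩ := geometric_hahn_banach_compact_closed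
    (convex_stdSimplex ℝ (Fin n)) (isCompact_stdSimplex ℝ (Fin n)) VR.convex hclosed hdisj
  have hf0 : ∀ x ∈ VR, f x = 0 := by
    intro x hx
    by_contra hfx
    have hvx := h3 (((v - 1) / f x) • x) (VR.smul_mem _ hx)
    rw [_root_.map_smul, smul_eq_mul, div_mul_cancel₀ _ hfx] at hvx
    linarith
  have hv0 : v < 0 := by
    have := h3 0 VR.zero_mem
    simpa using this
  refine ⟨f, fun i => ?_, hf0⟩
  have := h1 _ (single_mem_stdSimplex ℝ i)
  linarith

lemma rational_approx {k : ℕ} (c : Fin k → (Fin n → ℚ)) (x : Fin n → ℝ)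
    (hx : x ∈ Submodule.span ℝ (Set.range fun j => qr (c j))) {ε : ℝ} (hε : 0 < ε) :
    ∃ q : Fin k → ℚ, ∀ i, |x i - (((∑ j, q j • c j) i : ℚ) : ℝ)| < ε := by
  obtain ⟨a, ha⟩ := (Submodule.mem_span_range_iff_exists_fun ℝ).mp hx
  set D : ℝ := ∑ j, ∑ i, |(c j i : ℝ)| with hD
  have hD0 : 0 ≤ D := Finset.sum_nonneg fun j _ => Finset.sum_nonneg fun i _ => abs_nonneg _
  have hδ : 0 < ε / (D + 1) := div_pos hε (by linarith)
  choose q hq using fun j => exists_rat_near (a j) hδ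
  refine ⟨q, fun i => ?_⟩
  have hxi : x i = ∑ j, a j * (c j i : ℝ) := by
    rw [← ha]
    simp [qr, Finset.sum_apply]
  have hyi : (((∑ j, q j • c j) i : ℚ) : ℝ) = ∑ j, (q j : ℝ) * (c j i : ℝ) := by
    rw [Finset.sum_apply]
    push_cast
    refine Finset.sum_congr rfl fun j _ => ?_
    rw [Pi.smul_apply, smul_eq_mul]
    push_cast
    ring
  rw [hxi, hyi, ← Finset.sum_sub_distrib]
  have step1 : |∑ j, (a j * (c j i : ℝ) - (q j : ℝ) * (c j i : ℝ))|
      ≤ ∑ j, |a j - (q j : ℝ)| * |(c j i : ℝ)| := by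
    refine (Finset.abs_sum_le_sum_abs _ _).trans (le_of_eq ?_)
    refine Finset.sum_congr rfl fun j _ => ?_
    rw [← sub_mul, abs_mul]
  have step2 : ∑ j, |a j - (q j : ℝ)| * |(c j i : ℝ)|
      ≤ ∑ j, (ε / (D + 1)) * |(c j i : ℝ)| := by
    refine Finset.sum_le_sum fun j _ => ?_
    exact mul_le_mul_of_nonneg_right (le_of_lt (hq j)) (abs_nonneg _)
  have step3 : ∑ j, (ε / (D + 1)) * |(c j i : ℝ)| = (ε / (D + 1)) * ∑ j, |(c j i : ℝ)| := by
    rw [Finset.mul_sum]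
  have step4 : ∑ j, |(c j i : ℝ)| ≤ D := by
    refine Finset.sum_le_sum fun j _ => ?_
    exact Finset.single_le_sum (fun i' _ => abs_nonneg ((c j i' : ℝ))) (Finset.mem_univ i)
  have step5 : (ε / (D + 1)) * ∑ j, |(c j i : ℝ)| < ε := by
    calc (ε / (D + 1)) * ∑ j, |(c j i : ℝ)| ≤ (ε / (D + 1)) * D :=
          mul_le_mul_of_nonneg_left step4 hδ.le
      _ < (ε / (D + 1)) * (D + 1) := by
          exact mul_lt_mul_of_pos_left (by linarith) hδ
      _ = ε := div_mul_cancel₀ ε (by linarith)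
  calc |∑ j, (a j * (c j i : ℝ) - (q j : ℝ) * (c j i : ℝ))|
      ≤ ∑ j, |a j - (q j : ℝ)| * |(c j i : ℝ)| := step1
    _ ≤ ∑ j, (ε / (D + 1)) * |(c j i : ℝ)| := step2
    _ = (ε / (D + 1)) * ∑ j, |(c j i : ℝ)| := step3
    _ < ε := step5

end cast

section lattice
variable {n : ℕ}

def zq {n : ℕ} (u : Fin n → ℤ) : Fin n → ℚ := fun i => (u i : ℚ)

lemma den_mul_self (q : ℚ) : (q.den : ℚ) * q = (q.num : ℚ) := by
  have h : (q.den : ℚ) ≠ 0 := by exact_mod_cast q.den_nz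
  rw [mul_comm]
  exact (eq_div_iff h).mp (Rat.num_div_den q).symm

lemma clear_denominators (L : AddSubgroup (Fin n → ℤ)) {v : Fin n → ℚ}
    (hv : v ∈ Submodule.span ℚ (zq '' (L : Set (Fin n → ℤ)))) :
    ∃ N : ℕ, 0 < N ∧ ∃ w ∈ L, zq w = (N : ℚ) • v := by
  induction hv using Submodule.span_induction with
  | mem x hx =>
    obtain ⟨w, hw, rfl⟩ := hx
    exact ⟨1, one_pos, w, hw, by simp⟩
  | zero => exact ⟨1, one_pos, 0, zero_mem L, by funext i; simp [zq]⟩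
  | add x y hx hy ihx ihy =>
    obtain ⟨N₁, hN₁, w₁, hw₁, h₁⟩ := ihx
    obtain ⟨N₂, hN₂, w₂, hw₂, h₂⟩ := ihy
    refine ⟨N₁ * N₂, Nat.mul_pos hN₁ hN₂, (N₂ : ℤ) • w₁ + (N₁ : ℤ) • w₂,
      L.add_mem (L.zsmul_mem hw₁ _) (L.zsmul_mem hw₂ _), ?_⟩
    funext i
    have e₁ : (w₁ i : ℚ) = (N₁ : ℚ) * x i := congrFun h₁ i
    have e₂ : (w₂ i : ℚ) = (N₂ : ℚ) * y i := congrFun h₂ i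
    show (((N₂ : ℤ) • w₁ + (N₁ : ℤ) • w₂) i : ℚ) = ((N₁ * N₂ : ℕ) : ℚ) * (x + y) i
    rw [Pi.add_apply, Pi.smul_apply, Pi.smul_apply, Pi.add_apply]
    push_cast [smul_eq_mul]
    rw [e₁, e₂]
    ring
  | smul q x hx ihx =>
    obtain ⟨N, hN, w, hw, h⟩ := ihx
    refine ⟨N * q.den, Nat.mul_pos hN q.pos, q.num • w, L.zsmul_mem hw _, ?_⟩
    funext i
    have e : (w i : ℚ) = (N : ℚ) * x i := congrFun h i
    show ((q.num • w) i : ℚ) = ((N * q.den : ℕ) : ℚ) * (q • x) i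
    rw [Pi.smul_apply, Pi.smul_apply]
    push_cast [smul_eq_mul]
    rw [e]
    have hden : (q.den : ℚ) * q = (q.num : ℚ) := den_mul_self q
    calc (q.num : ℚ) * ((N : ℚ) * x i) = (N : ℚ) * (((q.den : ℚ) * q) * x i) := by
          rw [hden]; ring
      _ = (N : ℚ) * (q.den : ℚ) * (q * x i) := by ring

lemma hQ_of_hyp (L : AddSubgroup (Fin n → ℤ)) (H : ∀ u ∈ L, (∀ i, 0 ≤ u i) → u = 0) :
    ∀ v ∈ Submodule.span ℚ (zq '' (L : Set (Fin n → ℤ))), (∀ i, 0 ≤ v i) → v = 0 := by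
  intro v hv hvpos
  obtain ⟨N, hN, w, hw, hzq⟩ := clear_denominators L hv
  have hw0 : w = 0 := by
    refine H w hw fun i => ?_
    have h1 : (w i : ℚ) = (N : ℚ) * v i := congrFun hzq i
    have h2 : (0 : ℚ) ≤ (N : ℚ) * v i :=
      mul_nonneg (by positivity) (hvpos i)
    rw [← h1] at h2
    exact_mod_cast h2
  rw [hw0] at hzq
  have hNv : (N : ℚ) • v = 0 := by
    rw [← hzq]
    funext i
    simp [zq]
  have hNne : (N : ℚ) ≠ 0 := by positivity
  rcases smul_eq_zero.mp hNv with h | h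
  · exact absurd h hNne
  · exact h

end lattice

end Stmt7Aux

/-- `L ∩ ℕⁿ = {0}` iff there are positive integers `m₁,…,mₙ` with
`m₁u₁ + ⋯ + mₙuₙ = 0` for every `u ∈ L`. -/
theorem stmt7 {n : ℕ} (hn : 0 < n) (L : AddSubgroup (Fin n → ℤ)) :
    (∀ u ∈ L, (∀ i, 0 ≤ u i) → u = (0 : Fin n → ℤ)) ↔
      ∃ m : Fin n → ℤ, (∀ i, 0 < m i) ∧ ∀ u ∈ L, ∑ i, m i * u i = 0 := by
  classical
  constructor
  · intro H
    set VQ := Submodule.span ℚ (Stmt7Aux.zq '' (L : Set (Fin n → ℤ))) with hVQ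
    have hQ := Stmt7Aux.hQ_of_hyp L H
    obtain ⟨f, hfneg, hf0⟩ := Stmt7Aux.exists_neg_functional VQ hQ
    set xs : Fin n → ℝ := fun i => -f (Pi.single i 1) with hxs
    have hxspos : ∀ i, 0 < xs i := fun i => by
      rw [hxs]
      simpa using hfneg i
    have hfdot : ∀ z : Fin n → ℝ, f z = -(z ⬝ᵥ xs) := by
      intro z
      have hz : z = ∑ i, Pi.single i (z i) := (Finset.univ_sum_single z).symm
      calc f z = f (∑ i, Pi.single i (z i)) := by rw [← hz]
        _ = ∑ i, f (Pi.single i (z i)) := map_sum f _ _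
        _ = ∑ i, z i * f (Pi.single i 1) := by
            refine Finset.sum_congr rfl fun i _ => ?_
            have hsingle : Pi.single i (z i) = (z i) • (Pi.single i 1 : Fin n → ℝ) := by
              rw [← Pi.single_smul, smul_eq_mul, mul_one]
            rw [hsingle, _root_.map_smul, smul_eq_mul]
        _ = -(z ⬝ᵥ xs) := by
            show _ = -(∑ i, z i * xs i)
            rw [← Finset.sum_neg_distrib]
            refine Finset.sum_congr rfl fun i _ => ?_
            rw [hxs]
            ring
    have hxsperp : xs ∈ Stmt7Aux.perp (fun j => Stmt7Aux.qr (Stmt7Aux.bfam VQ j)) := by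
      intro j
      have hgVR : Stmt7Aux.qr (Stmt7Aux.bfam VQ j)
          ∈ Submodule.span ℝ (Stmt7Aux.qr '' (VQ : Set (Fin n → ℚ))) :=
        Submodule.subset_span ⟨Stmt7Aux.bfam VQ j, Stmt7Aux.bfam_mem VQ j, rfl⟩
      have h := hf0 _ hgVR
      rw [hfdot] at h
      linarith [h]
    rw [Stmt7Aux.perpR_eq_span' (Stmt7Aux.bfam VQ),
      Stmt7Aux.span_qr_image (Stmt7Aux.perp (Stmt7Aux.bfam VQ))] at hxsperp
    have hne : Nonempty (Fin n) := ⟨⟨0, hn⟩⟩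
    have hεpos : 0 < Finset.univ.inf' Finset.univ_nonempty xs :=
      (Finset.lt_inf'_iff _).mpr fun i _ => hxspos i
    obtain ⟨q, hq⟩ := Stmt7Aux.rational_approx _ xs hxsperp hεpos
    set y := ∑ j, q j • Stmt7Aux.bfam (Stmt7Aux.perp (Stmt7Aux.bfam VQ)) j with hy
    have hyPQ : y ∈ Stmt7Aux.perp (Stmt7Aux.bfam VQ) :=
      Submodule.sum_mem _ fun j _ => Submodule.smul_mem _ _ (Stmt7Aux.bfam_mem _ j)
    have hypos : ∀ i, 0 < y i := by
      intro i
      have h1 := hq i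
      have h2 : Finset.univ.inf' Finset.univ_nonempty xs ≤ xs i :=
        Finset.inf'_le _ (Finset.mem_univ i)
      rw [abs_lt] at h1
      have h3 : (0 : ℝ) < (y i : ℝ) := by linarith [h1.1]
      exact_mod_cast h3
    have hyperpL : ∀ u ∈ L, (Stmt7Aux.zq u) ⬝ᵥ y = 0 := by
      intro u hu
      have hzu : Stmt7Aux.zq u ∈ VQ := Submodule.subset_span ⟨u, hu, rfl⟩
      exact (Stmt7Aux.mem_perp_iff_span.mp hyPQ) _ ((Stmt7Aux.bfam_span VQ).symm ▸ hzu)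
    set N : ℕ := ∏ j, (y j).den with hN
    set m : Fin n → ℤ := fun i => (y i).num * ∏ j ∈ Finset.univ.erase i, ((y j).den : ℤ) with hm
    have hmcast : ∀ i, (m i : ℚ) = (N : ℚ) * y i := by
      intro i
      have hsplit : (N : ℚ) = ((y i).den : ℚ) * ∏ j ∈ Finset.univ.erase i, ((y j).den : ℚ) := by
        rw [hN]
        push_cast
        exact (Finset.mul_prod_erase Finset.univ _ (Finset.mem_univ i)).symm
      rw [hsplit, hm]
      push_cast
      rw [mul_comm ((y i).den : ℚ) _, mul_assoc, Stmt7Aux.den_mul_self]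
      ring
    refine ⟨m, fun i => ?_, fun u hu => ?_⟩
    · refine mul_pos (Rat.num_pos.mpr (hypos i)) (Finset.prod_pos fun j _ => ?_)
      exact_mod_cast (y j).pos
    · have hcast : ((∑ i, m i * u i : ℤ) : ℚ) = (N : ℚ) * ((Stmt7Aux.zq u) ⬝ᵥ y) := by
        push_cast
        show _ = (N : ℚ) * ∑ i, Stmt7Aux.zq u i * y i
        rw [Finset.mul_sum]
        refine Finset.sum_congr rfl fun i _ => ?_
        rw [hmcast i]
        show (N : ℚ) * y i * (u i : ℚ) = (N : ℚ) * (Stmt7Aux.zq u i * y i)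
        show (N : ℚ) * y i * (u i : ℚ) = (N : ℚ) * ((u i : ℚ) * y i)
        ring
      rw [hyperpL u hu, mul_zero] at hcast
      exact_mod_cast hcast
  · rintro ⟨m, hmpos, hmperp⟩ u hu hupos
    have h := hmperp u hu
    have hterm : ∀ i ∈ Finset.univ, m i * u i = 0 :=
      (Finset.sum_eq_zero_iff_of_nonneg fun i _ =>
        mul_nonneg (hmpos i).le (hupos i)).mp h
    funext i
    have hi := hterm i (Finset.mem_univ i)
    rcases mul_eq_zero.mp hi with h' | h'
    · exact absurd h' (ne_of_gt (hmpos i))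
    · exact h'
end

section
/- With the notation of the geometric setup: if F_1,…,F_s ∈ K[x_1,…,x_n] generate rad(I_L) up to radical, i.e. rad(I_L) = rad((F_1,…,F_s)), then the union ⋃_{i=1}^{s} D_{L'}^{L}(F_i) is a spanning subcomplex of D_{L'}^{L}; that is, every vertex 𝔼_j of D_{L'}^{L} is a vertex of D_{L'}^{L}(F_i) for some i. -/
open MvPolynomial

/-- The cone `pos_ℚ(v₁,…,vₙ)` spanned by finitely many vectors of `ℚ^m`. -/
def posQ {n m : ℕ} (v : Fin n → Fin m → ℚ) : Set (Fin m → ℚ) :=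
  {x | ∃ d : Fin n → ℚ, (∀ i, 0 ≤ d i) ∧ x = ∑ i, d i • v i}

/-- The subcone `σ(E) = pos_ℚ(rᵢ : i ∈ E)`. -/
def posE {t m : ℕ} (r : Fin t → Fin m → ℚ) (E : Finset (Fin t)) : Set (Fin m → ℚ) :=
  {x | ∃ d : Fin t → ℚ, (∀ i, 0 ≤ d i) ∧ (∀ i ∉ E, d i = 0) ∧ x = ∑ i, d i • r i}

/-- The relative interior `relint_ℚ(pos_ℚ(rᵢ : i ∈ E))`. -/
def relintE {t m : ℕ} (r : Fin t → Fin m → ℚ) (E : Finset (Fin t)) : Set (Fin m → ℚ) :=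
  {x | ∃ d : Fin t → ℚ, (∀ i ∈ E, 0 < d i) ∧ (∀ i ∉ E, d i = 0) ∧ x = ∑ i, d i • r i}

/-- `F` is a face of the cone `σ`: it is cut out by a supporting linear functional. -/
def IsFaceOf {m : ℕ} (σ F : Set (Fin m → ℚ)) : Prop :=
  ∃ c : Fin m → ℚ, (∀ x ∈ σ, 0 ≤ ∑ j, c j * x j) ∧ F = σ ∩ {x | ∑ j, c j * x j = 0}

/-- The ray spanned by a vector `v`. -/
def rayOf {m : ℕ} (v : Fin m → ℚ) : Set (Fin m → ℚ) := {x | ∃ q : ℚ, 0 ≤ q ∧ x = q • v}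

/-- Cast a family of integer vectors to rational vectors. -/
def castQ {n m : ℕ} (a : Fin n → Fin m → ℤ) : Fin n → Fin m → ℚ := fun i j => (a i j : ℚ)

/-- `T` is a face of the simplicial complex `D` (with vertices `𝔼₁,…,𝔼_f`) determined by the
projected cone data `rB`: the relative interiors of the cones `pos_ℚ(rB j : j ∈ 𝔼ᵢ)`, `i ∈ T`,
have a common point. -/
def DFace {t f m : ℕ} (rB : Fin t → Fin m → ℚ) (𝔼 : Fin f → Finset (Fin t))
    (T : Set (Fin f)) : Prop :=
  (⋂ j ∈ T, relintE rB (𝔼 j)).Nonempty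

/-- The cone `cone(N)` of a monomial with exponent vector `u`:
the intersection of all subcones `σ(E)` containing all the `aᵢ` with `i` in the support of `u`. -/
def coneOf {n t m : ℕ} (aQ : Fin n → Fin m → ℚ) (rQ : Fin t → Fin m → ℚ)
    (u : Fin n →₀ ℕ) : Set (Fin m → ℚ) :=
  ⋂ E ∈ {E : Finset (Fin t) | ∀ i ∈ u.support, aQ i ∈ posE rQ E}, posE rQ E



lemma exists_between_finsets (A B : Finset ℚ) (h : ∀ a ∈ A, ∀ b ∈ B, a < b) :
    ∃ x : ℚ, (∀ a ∈ A, a < x) ∧ (∀ b ∈ B, x < b) := by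
  rcases A.eq_empty_or_nonempty with hA | hA
  · rcases B.eq_empty_or_nonempty with hB | hB
    · exact ⟨0, by simp [hA], by simp [hB]⟩
    · exact ⟨B.min' hB - 1, by simp [hA],
        fun b hb => by have := B.min'_le b hb; linarith⟩
  · rcases B.eq_empty_or_nonempty with hB | hB
    · exact ⟨A.max' hA + 1, fun a ha => by have := A.le_max' a ha; linarith, by simp [hB]⟩
    · refine ⟨(A.max' hA + B.min' hB)/2, fun a ha => ?_, fun b hb => ?_⟩
      · have h1 := A.le_max' a ha
        have h2 := h _ (A.max'_mem hA) _ (B.min'_mem hB)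
        linarith
      · have h1 := B.min'_le b hb
        have h2 := h _ (A.max'_mem hA) _ (B.min'_mem hB)
        linarith

theorem gordanQ : ∀ (m : ℕ) {ι : Type} [Fintype ι] (v : ι → Fin m → ℚ),
    (∀ lam : ι → ℚ, (∀ i, 0 ≤ lam i) → ∑ i, lam i • v i = 0 → ∀ i, lam i = 0) →
    ∃ c : Fin m → ℚ, ∀ i, 0 < ∑ j, c j * v i j := by
  intro m
  induction m with
  | zero =>
    intro ι _ v h
    by_cases hι : Nonempty ι
    · exfalso
      obtain ⟨i0⟩ := hι
      have h1 := h (fun _ => 1) (fun _ => zero_le_one) ?_ i0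
      · simp at h1
      · funext j; exact j.elim0
    · exact ⟨0, fun i => absurd ⟨i⟩ hι⟩
  | succ m IH =>
    intro ι _ v h
    classical
    set lst := Fin.last m with hlst
    let Z := {i : ι // v i lst = 0}
    let P := {i : ι // 0 < v i lst}
    let N := {i : ι // v i lst < 0}
    let Fam : Z ⊕ P × N → Fin (m+1) → ℚ :=
      Sum.elim (fun z => v z.1)
        (fun pq => (-(v pq.2.1 lst)) • v pq.1.1 + (v pq.1.1 lst) • v pq.2.1)
    have hFamLast : ∀ x, Fam x lst = 0 := by
      rintro (z | pq)
      · exact z.2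
      · simp only [Fam, Sum.elim_inr, Pi.add_apply, Pi.smul_apply, smul_eq_mul]
        ring
    set fam : Z ⊕ P × N → Fin m → ℚ := fun x j => Fam x j.castSucc with hfam
    have hIH : ∀ lam' : Z ⊕ P × N → ℚ, (∀ x, 0 ≤ lam' x) →
        ∑ x, lam' x • fam x = 0 → ∀ x, lam' x = 0 := by
      intro lam' hnn hs
      set A : ι → ℚ := fun i => ∑ z : Z, if z.1 = i then lam' (Sum.inl z) else 0 with hA
      set B : ι → ℚ := fun i =>
        ∑ pq : P × N, if pq.1.1 = i then lam' (Sum.inr pq) * (-(v pq.2.1 lst)) else 0 with hB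
      set C : ι → ℚ := fun i =>
        ∑ pq : P × N, if pq.2.1 = i then lam' (Sum.inr pq) * (v pq.1.1 lst) else 0 with hC
      have hAnn : ∀ i, 0 ≤ A i := by
        intro i; refine Finset.sum_nonneg fun z _ => ?_
        split
        · exact hnn _
        · exact le_rfl
      have hBnn : ∀ i, 0 ≤ B i := by
        intro i; refine Finset.sum_nonneg fun pq _ => ?_
        split
        · exact mul_nonneg (hnn _) (by linarith [pq.2.2])
        · exact le_rfl
      have hCnn : ∀ i, 0 ≤ C i := by
        intro i; refine Finset.sum_nonneg fun pq _ => ?_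
        split
        · exact mul_nonneg (hnn _) (le_of_lt pq.1.2)
        · exact le_rfl
      set Λ : ι → ℚ := fun i => A i + B i + C i with hΛ
      have keyA : ∑ i, A i • v i = ∑ z : Z, lam' (Sum.inl z) • v z.1 := by
        rw [hA]
        simp only [Finset.sum_smul]
        rw [Finset.sum_comm]
        refine Finset.sum_congr rfl fun z _ => ?_
        simp [ite_smul, zero_smul, Finset.sum_ite_eq]
      have keyB : ∑ i, B i • v i
          = ∑ pq : P × N, (lam' (Sum.inr pq) * (-(v pq.2.1 lst))) • v pq.1.1 := by
        rw [hB]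
        simp only [Finset.sum_smul]
        rw [Finset.sum_comm]
        refine Finset.sum_congr rfl fun pq _ => ?_
        simp [ite_smul, zero_smul, Finset.sum_ite_eq]
      have keyC : ∑ i, C i • v i
          = ∑ pq : P × N, (lam' (Sum.inr pq) * (v pq.1.1 lst)) • v pq.2.1 := by
        rw [hC]
        simp only [Finset.sum_smul]
        rw [Finset.sum_comm]
        refine Finset.sum_congr rfl fun pq _ => ?_
        simp [ite_smul, zero_smul, Finset.sum_ite_eq]
      have claim1 : ∑ i, Λ i • v i = ∑ x, lam' x • Fam x := by
        have hR : ∑ x, lam' x • Fam x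
            = (∑ z : Z, lam' (Sum.inl z) • v z.1)
              + ((∑ pq : P × N, (lam' (Sum.inr pq) * (-(v pq.2.1 lst))) • v pq.1.1)
                + ∑ pq : P × N, (lam' (Sum.inr pq) * (v pq.1.1 lst)) • v pq.2.1) := by
          rw [Fintype.sum_sum_type, ← Finset.sum_add_distrib]
          refine congrArg₂ (· + ·) rfl (Finset.sum_congr rfl fun pq _ => ?_)
          simp only [Fam, Sum.elim_inr, smul_add, mul_smul]
        rw [hR]
        simp only [hΛ, add_smul]
        rw [Finset.sum_add_distrib, Finset.sum_add_distrib, keyA, keyB, keyC, add_assoc]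
      have claim2 : ∑ i, Λ i • v i = 0 := by
        rw [claim1]
        funext j
        rw [Finset.sum_apply]
        refine Fin.lastCases ?_ ?_ j
        · simp only [Pi.smul_apply, smul_eq_mul]
          rw [show (0 : Fin (m+1) → ℚ) (Fin.last m) = 0 from rfl]
          refine Finset.sum_eq_zero fun x _ => ?_
          rw [hFamLast x, mul_zero]
        · intro j'
          have := congrFun hs j'
          rw [Finset.sum_apply] at this
          simpa using this
      have hall := h Λ (fun i => add_nonneg (add_nonneg (hAnn i) (hBnn i)) (hCnn i)) claim2
      -- extract vanishing
      rintro (z | pq)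
      · have hiz : A z.1 + B z.1 + C z.1 = 0 := hall z.1
        have hA0 : A z.1 = 0 := by
          have := hBnn z.1; have := hCnn z.1; have := hAnn z.1; linarith
        rw [hA] at hA0
        have := (Finset.sum_eq_zero_iff_of_nonneg (fun z' _ => by
          split
          · exact hnn _
          · exact le_rfl)).mp hA0 z (Finset.mem_univ z)
        simpa using this
      · have hip : A pq.1.1 + B pq.1.1 + C pq.1.1 = 0 := hall pq.1.1
        have hB0 : B pq.1.1 = 0 := by
          have := hBnn pq.1.1; have := hCnn pq.1.1; have := hAnn pq.1.1; linarith
        rw [hB] at hB0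
        have := (Finset.sum_eq_zero_iff_of_nonneg (fun pq' _ => by
          split
          · exact mul_nonneg (hnn _) (by linarith [pq'.2.2])
          · exact le_rfl)).mp hB0 pq (Finset.mem_univ pq)
        simp only [if_pos rfl] at this
        rcases mul_eq_zero.mp this with h1 | h2
        · exact h1
        · exfalso
          have h3 : v pq.2.1 lst < 0 := pq.2.2
          have h4 := neg_eq_zero.mp h2
          linarith
    obtain ⟨c', hc'⟩ := IH fam hIH
    set s : ι → ℚ := fun i => ∑ j : Fin m, c' j * v i j.castSucc with hsdef
    have hz : ∀ z : Z, 0 < s z.1 := fun z => by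
      have := hc' (Sum.inl z); simpa [fam, Fam] using this
    have hpq : ∀ pq : P × N,
        0 < (-(v pq.2.1 lst)) * s pq.1.1 + (v pq.1.1 lst) * s pq.2.1 := by
      intro pq
      have := hc' (Sum.inr pq)
      simp only [fam, Fam, Sum.elim_inr, Pi.add_apply, Pi.smul_apply, smul_eq_mul] at this
      calc 0 < ∑ j : Fin m, c' j * (-(v pq.2.1 lst) * v pq.1.1 j.castSucc
            + v pq.1.1 lst * v pq.2.1 j.castSucc) := this
        _ = (-(v pq.2.1 lst)) * s pq.1.1 + (v pq.1.1 lst) * s pq.2.1 := by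
            rw [hsdef]
            simp only [Finset.mul_sum]
            rw [← Finset.sum_add_distrib]
            refine Finset.sum_congr rfl fun j _ => by ring
    -- choose the last coordinate
    obtain ⟨cm, hlb, hub⟩ := exists_between_finsets
      (Finset.univ.image (fun p : P => (-(s p.1))/(v p.1 lst)))
      (Finset.univ.image (fun q : N => (s q.1)/(-(v q.1 lst))))
      (by
        intro a ha b hb
        obtain ⟨p, _, rfl⟩ := Finset.mem_image.mp ha
        obtain ⟨q, _, rfl⟩ := Finset.mem_image.mp hb
        have h1 : 0 < v p.1 lst := p.2
        have h2 : 0 < -(v q.1 lst) := by linarith [q.2]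
        rw [div_lt_div_iff₀ h1 h2]
        nlinarith [hpq (p, q)])
    refine ⟨Fin.snoc c' cm, fun i => ?_⟩
    have hsum : ∑ j : Fin (m+1), (Fin.snoc c' cm : Fin (m+1) → ℚ) j * v i j
        = s i + cm * v i lst := by
      rw [Fin.sum_univ_castSucc]
      simp [Fin.snoc_castSucc, Fin.snoc_last, hsdef, hlst]
    rw [hsum]
    rcases lt_trichotomy (v i lst) 0 with hneg | hzer | hpos
    · have := hub ((s i)/(-(v i lst))) (Finset.mem_image.mpr ⟨⟨i, hneg⟩, Finset.mem_univ _, rfl⟩)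
      rw [lt_div_iff₀ (by linarith : (0:ℚ) < -(v i lst))] at this
      nlinarith
    · rw [hzer, mul_zero, add_zero]; exact hz ⟨i, hzer⟩
    · have := hlb ((-(s i))/(v i lst)) (Finset.mem_image.mpr ⟨⟨i, hpos⟩, Finset.mem_univ _, rfl⟩)
      rw [div_lt_iff₀ hpos] at this
      nlinarith

section ConeLemmas
variable {m t n : ℕ}

lemma dot_sum_smul {ι : Type*} (c : Fin m → ℚ) (s : Finset ι) (d : ι → ℚ)
    (w : ι → Fin m → ℚ) :
    ∑ j, c j * (∑ i ∈ s, d i • w i) j = ∑ i ∈ s, d i * ∑ j, c j * w i j := by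
  simp only [Finset.sum_apply, Pi.smul_apply, smul_eq_mul, Finset.mul_sum]
  rw [Finset.sum_comm]
  refine Finset.sum_congr rfl fun i _ => ?_
  refine Finset.sum_congr rfl fun j _ => by ring

lemma zero_mem_posE (r : Fin t → Fin m → ℚ) (E : Finset (Fin t)) : (0 : Fin m → ℚ) ∈ posE r E :=
  ⟨0, fun _ => le_rfl, fun _ _ => rfl, by simp⟩

lemma add_mem_posE {r : Fin t → Fin m → ℚ} {E : Finset (Fin t)} {x y : Fin m → ℚ}
    (hx : x ∈ posE r E) (hy : y ∈ posE r E) : x + y ∈ posE r E := by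
  obtain ⟨d, hd, hdE, rfl⟩ := hx
  obtain ⟨e, he, heE, rfl⟩ := hy
  refine ⟨d + e, fun i => add_nonneg (hd i) (he i),
    fun i hi => by simp only [Pi.add_apply, hdE i hi, heE i hi, add_zero], ?_⟩
  rw [← Finset.sum_add_distrib]
  exact Finset.sum_congr rfl fun i _ => by simp only [Pi.add_apply, add_smul]

lemma smul_mem_posE {r : Fin t → Fin m → ℚ} {E : Finset (Fin t)} {x : Fin m → ℚ} {q : ℚ}
    (hq : 0 ≤ q) (hx : x ∈ posE r E) : q • x ∈ posE r E := by
  obtain ⟨d, hd, hdE, rfl⟩ := hx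
  refine ⟨fun i => q * d i, fun i => mul_nonneg hq (hd i),
    fun i hi => by simp only [hdE i hi, mul_zero], ?_⟩
  rw [Finset.smul_sum]
  exact Finset.sum_congr rfl fun i _ => by rw [smul_smul]

lemma gen_mem_posE {r : Fin t → Fin m → ℚ} {E : Finset (Fin t)} {i : Fin t} (hi : i ∈ E) :
    r i ∈ posE r E := by
  classical
  refine ⟨fun i' => if i' = i then 1 else 0,
    fun i' => by dsimp only; split <;> norm_num,
    fun i' hi' => by
      dsimp only; rw [if_neg]; rintro rfl; exact hi' hi, ?_⟩
  simp only [ite_smul, one_smul, zero_smul]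
  rw [Finset.sum_ite_eq' Finset.univ i r]
  simp

lemma sum_smul_mem_posE {r : Fin t → Fin m → ℚ} {E : Finset (Fin t)} {ι : Type*}
    (s : Finset ι) (d : ι → ℚ) (w : ι → Fin m → ℚ)
    (hd : ∀ i ∈ s, 0 ≤ d i) (hw : ∀ i ∈ s, w i ∈ posE r E) :
    ∑ i ∈ s, d i • w i ∈ posE r E :=
  Finset.sum_induction _ (· ∈ posE r E) (fun _ _ ha hb => add_mem_posE ha hb)
    (zero_mem_posE r E) (fun i hi => smul_mem_posE (hd i hi) (hw i hi))

lemma posE_mono {r : Fin t → Fin m → ℚ} {E E' : Finset (Fin t)} (h : E ⊆ E') :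
    posE r E ⊆ posE r E' := by
  rintro x ⟨d, hd, hdE, rfl⟩
  exact ⟨d, hd, fun i hi => hdE i (fun hc => hi (h hc)), rfl⟩

lemma posE_subset_posQ (r : Fin t → Fin m → ℚ) (E : Finset (Fin t)) :
    posE r E ⊆ posQ r := by
  rintro x ⟨d, hd, hdE, rfl⟩
  exact ⟨d, hd, rfl⟩

lemma mem_posQ (v : Fin n → Fin m → ℚ) (k : Fin n) : v k ∈ posQ v := by
  classical
  refine ⟨fun i' => if i' = k then 1 else 0,
    fun i' => by dsimp only; split <;> norm_num, ?_⟩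
  simp only [ite_smul, one_smul, zero_smul]
  rw [Finset.sum_ite_eq' Finset.univ k v]
  simp

lemma posE_subset_of_gens {r r' : Fin t → Fin m → ℚ} {E E' : Finset (Fin t)}
    (h : ∀ i ∈ E, r i ∈ posE r' E') : posE r E ⊆ posE r' E' := by
  classical
  rintro x ⟨d, hd, hdE, rfl⟩
  have : ∑ i, d i • r i = ∑ i, d i • (if i ∈ E then r i else 0) := by
    refine Finset.sum_congr rfl fun i _ => ?_
    by_cases hi : i ∈ E
    · rw [if_pos hi]
    · rw [hdE i hi]; simp
  rw [this]
  refine sum_smul_mem_posE _ _ _ (fun i _ => hd i) fun i _ => ?_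
  split
  · exact h i (by assumption)
  · exact zero_mem_posE r' E'

lemma mem_ray_self (v : Fin m → ℚ) : v ∈ rayOf v := ⟨1, zero_le_one, (one_smul _ _).symm⟩

lemma rayOf_eq_of_smul {v w : Fin m → ℚ} {q : ℚ} (hq : 0 < q) (hw : w = q • v) :
    rayOf w = rayOf v := by
  ext x
  constructor
  · rintro ⟨q', hq', rfl⟩
    exact ⟨q' * q, mul_nonneg hq' hq.le, by rw [hw, smul_smul]⟩
  · rintro ⟨q', hq', rfl⟩
    exact ⟨q' / q, div_nonneg hq' hq.le, by rw [hw, smul_smul, div_mul_cancel₀ _ hq.ne']⟩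

end ConeLemmas

section RayLemmas
variable {n m t : ℕ} {a : Fin n → Fin m → ℤ} {rvec : Fin t → Fin m → ℤ}

/-- If an extreme ray generator lies in a subcone, its index belongs to the subcone
(given distinctness of rays). -/
lemma index_mem_of_gen_mem
    (hr0 : ∀ i, castQ rvec i ≠ 0)
    (hray : ∀ i, IsFaceOf (posQ (castQ a)) (rayOf (castQ rvec i)))
    (hrinj : ∀ i j : Fin t, rayOf (castQ rvec i) = rayOf (castQ rvec j) → i = j)
    (hspan : posQ (castQ a) = posQ (castQ rvec))
    {i : Fin t} {E' : Finset (Fin t)} (h : castQ rvec i ∈ posE (castQ rvec) E') :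
    i ∈ E' := by
  set rQ := castQ rvec with hrQ
  obtain ⟨c, hc, hceq⟩ := hray i
  have hmemray : rQ i ∈ posQ (castQ a) ∩ {x | ∑ j, c j * x j = 0} := by
    rw [← hceq]; exact mem_ray_self _
  have hdot : ∑ j, c j * rQ i j = 0 := hmemray.2
  obtain ⟨d, hd, hdE, heq⟩ := h
  have hexp : ∑ i', d i' * ∑ j, c j * rQ i' j = 0 := by
    rw [← dot_sum_smul c Finset.univ d rQ, ← heq, hdot]
  have hnn : ∀ i' ∈ Finset.univ, 0 ≤ d i' * ∑ j, c j * rQ i' j := fun i' _ =>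
    mul_nonneg (hd i') (hc _ (hspan ▸ mem_posQ rQ i'))
  have hzero := (Finset.sum_eq_zero_iff_of_nonneg hnn).mp hexp
  by_contra hnotin
  apply hr0 i
  show rQ i = 0
  rw [heq]
  refine Finset.sum_eq_zero fun i' _ => ?_
  by_cases hd0 : d i' = 0
  · rw [hd0, zero_smul]
  · have hdoti' : ∑ j, c j * rQ i' j = 0 := by
      have := hzero i' (Finset.mem_univ i')
      rcases mul_eq_zero.mp this with h1 | h2
      · exact absurd h1 hd0
      · exact h2
    have hmem : rQ i' ∈ rayOf (rQ i) := by
      rw [hceq]; exact ⟨hspan ▸ mem_posQ rQ i', hdoti'⟩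
    obtain ⟨q, hq0, hq⟩ := hmem
    rcases hq0.lt_or_eq with hqpos | hqzero
    · exfalso
      have hii : i' = i := hrinj i' i (rayOf_eq_of_smul hqpos hq)
      rw [hii] at hd0
      exact hd0 (hdE i hnotin)
    · rw [hq, ← hqzero, zero_smul, smul_zero]

/-- every extreme ray of `σ` carries some `a_k`. -/
lemma exists_a_on_ray
    (hr0 : ∀ i, castQ rvec i ≠ 0)
    (hray : ∀ i, IsFaceOf (posQ (castQ a)) (rayOf (castQ rvec i)))
    (hspan : posQ (castQ a) = posQ (castQ rvec))
    (i : Fin t) :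
    ∃ k : Fin n, ∃ q : ℚ, 0 < q ∧ castQ a k = q • castQ rvec i := by
  set rQ := castQ rvec with hrQ
  set aQ := castQ a with haQ
  obtain ⟨c, hc, hceq⟩ := hray i
  have hmemray : rQ i ∈ posQ aQ ∩ {x | ∑ j, c j * x j = 0} := by
    rw [← hceq]; exact mem_ray_self _
  have hdot : ∑ j, c j * rQ i j = 0 := hmemray.2
  obtain ⟨d, hd, heq⟩ : rQ i ∈ posQ aQ := hspan ▸ mem_posQ rQ i
  have hexp : ∑ k, d k * ∑ j, c j * aQ k j = 0 := by
    rw [← dot_sum_smul c Finset.univ d aQ, ← heq, hdot]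
  have hnn : ∀ k ∈ Finset.univ, 0 ≤ d k * ∑ j, c j * aQ k j := fun k _ =>
    mul_nonneg (hd k) (hc _ (mem_posQ aQ k))
  have hzero := (Finset.sum_eq_zero_iff_of_nonneg hnn).mp hexp
  by_contra hno
  push_neg at hno
  apply hr0 i
  show rQ i = 0
  rw [heq]
  refine Finset.sum_eq_zero fun k _ => ?_
  by_cases hd0 : d k = 0
  · rw [hd0, zero_smul]
  · have hdotk : ∑ j, c j * aQ k j = 0 := by
      have := hzero k (Finset.mem_univ k)
      rcases mul_eq_zero.mp this with h1 | h2
      · exact absurd h1 hd0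
      · exact h2
    have hmem : aQ k ∈ rayOf (rQ i) := by
      rw [hceq]; exact ⟨mem_posQ aQ k, hdotk⟩
    obtain ⟨q, hq0, hq⟩ := hmem
    rcases hq0.lt_or_eq with hqpos | hqzero
    · exact absurd hq (hno k q hqpos)
    · rw [hq, ← hqzero, zero_smul, smul_zero]

end RayLemmas



section GordanSubspace

/-- linear functional given by dot with `c`. -/
def dotL {m : ℕ} (c : Fin m → ℚ) : (Fin m → ℚ) →ₗ[ℚ] ℚ where
  toFun := fun y => ∑ j, c j * y j
  map_add' := by
    intro x y
    simp only [Pi.add_apply, mul_add, Finset.sum_add_distrib]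
  map_smul' := by
    intro q y
    simp only [Pi.smul_apply, smul_eq_mul, RingHom.id_apply, Finset.mul_sum]
    exact Finset.sum_congr rfl fun j _ => by ring

lemma dotL_eq_dot {m : ℕ} (g : (Fin m → ℚ) →ₗ[ℚ] ℚ) (x : Fin m → ℚ) :
    g x = ∑ j, g (fun j' => if j = j' then 1 else 0) * x j := by
  conv_lhs => rw [pi_eq_sum_univ x]
  rw [map_sum]
  exact Finset.sum_congr rfl fun j _ => by rw [map_smul]; simp [mul_comm]

theorem gordan_subspace {m : ℕ} {ι : Type} [Fintype ι] (v : ι → Fin m → ℚ)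
    (V : Submodule ℚ (Fin m → ℚ))
    (h : ∀ lam : ι → ℚ, (∀ i, 0 ≤ lam i) → (∑ i, lam i • v i) ∈ V → ∀ i, lam i = 0) :
    ∃ c : Fin m → ℚ, (∀ x ∈ V, ∑ j, c j * x j = 0) ∧ ∀ i, 0 < ∑ j, c j * v i j := by
  obtain ⟨W, hW⟩ := Submodule.exists_isCompl V
  set π := Submodule.linearProjOfIsCompl W V hW.symm with hπdef
  set P : (Fin m → ℚ) →ₗ[ℚ] (Fin m → ℚ) := W.subtype.comp π with hPdef
  have hPzero : ∀ x ∈ V, P x = 0 := by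
    intro x hx
    simp only [hPdef, LinearMap.comp_apply]
    rw [show π x = 0 from (Submodule.linearProjOfIsCompl_apply_eq_zero_iff hW.symm).mpr hx]
    rfl
  have hPker : ∀ x, P x = 0 → x ∈ V := by
    intro x hx
    simp only [hPdef, LinearMap.comp_apply] at hx
    have : π x = 0 := by
      apply Subtype.ext
      simpa using hx
    exact (Submodule.linearProjOfIsCompl_apply_eq_zero_iff hW.symm).mp this
  obtain ⟨c0, hc0⟩ := gordanQ m (fun i => P (v i)) (by
    intro lam hnn hsum
    refine h lam hnn ?_
    apply hPker
    rw [map_sum]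
    calc ∑ i, P (lam i • v i) = ∑ i, lam i • P (v i) := by
          exact Finset.sum_congr rfl fun i _ => map_smul P (lam i) (v i)
      _ = 0 := hsum)
  set g := (dotL c0).comp P with hgdef
  set c : Fin m → ℚ := fun j => g (fun j' => if j = j' then 1 else 0) with hcdef
  have hdot : ∀ x, ∑ j, c j * x j = g x := fun x => (dotL_eq_dot g x).symm
  refine ⟨c, fun x hx => ?_, fun i => ?_⟩
  · rw [hdot x]
    simp only [hgdef, LinearMap.comp_apply, hPzero x hx, map_zero]
  · rw [hdot (v i)]
    simpa only [hgdef, LinearMap.comp_apply, dotL, LinearMap.coe_mk, AddHom.coe_mk]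
      using hc0 i

end GordanSubspace

section Denominators

lemma exists_int_scale {n : ℕ} (lam : Fin n → ℚ) :
    ∃ D : ℤ, 0 < D ∧ ∀ k, ∃ zk : ℤ, (zk : ℚ) = D * lam k := by
  classical
  refine ⟨∏ k, ((lam k).den : ℤ), ?_, ?_⟩
  · exact Finset.prod_pos fun k _ => Int.natCast_pos.mpr (lam k).den_pos
  · intro k
    have hdvd : ((lam k).den : ℤ) ∣ ∏ k', ((lam k').den : ℤ) :=
      Finset.dvd_prod_of_mem _ (Finset.mem_univ k)
    obtain ⟨cc, hcc⟩ := hdvd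
    refine ⟨(lam k).num * cc, ?_⟩
    have hden : ((lam k).den : ℚ) ≠ 0 := by positivity
    have hnum : ((lam k).num : ℚ) = lam k * (lam k).den := by
      exact (Rat.mul_den_eq_num (lam k)).symm
    have hccQ : ((∏ k', ((lam k').den : ℤ) : ℤ) : ℚ) = ((lam k).den : ℚ) * (cc : ℚ) := by
      exact_mod_cast hcc
    rw [Int.cast_mul, hccQ, hnum]
    ring

end Denominators



section Witness
variable {n m t : ℕ}

lemma int_rel_of_rat_rel (a : Fin n → Fin m → ℤ) (u : Fin n → ℤ)
    (h : ∑ k, (u k : ℚ) • castQ a k = 0) : ∑ k, u k • a k = 0 := by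
  funext j
  have := congrFun h j
  simp only [Finset.sum_apply, Pi.smul_apply, smul_eq_mul, Pi.zero_apply, castQ] at this ⊢
  exact_mod_cast this

lemma rat_rel_of_int_rel (a : Fin n → Fin m → ℤ) (u : Fin n → ℤ)
    (h : ∑ k, u k • a k = 0) : ∑ k, (u k : ℚ) • castQ a k = 0 := by
  funext j
  have := congrFun h j
  simp only [Finset.sum_apply, Pi.smul_apply, smul_eq_mul, Pi.zero_apply, castQ] at this ⊢
  exact_mod_cast this

/-- there is no nontrivial nonnegative rational relation among the `a_k`. -/
lemma no_nonneg_rel (L : AddSubgroup (Fin n → ℤ))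
    (hLpos : ∀ u ∈ L, (∀ i, 0 ≤ u i) → u = (0 : Fin n → ℤ))
    (a : Fin n → Fin m → ℤ)
    (hA : ∀ u : Fin n → ℤ, u ∈ satSet L ↔ ∑ i, u i • a i = 0) :
    ∀ lam : Fin n → ℚ, (∀ k, 0 ≤ lam k) → ∑ k, lam k • castQ a k = 0 → ∀ k, lam k = 0 := by
  intro lam hnn hrel k
  obtain ⟨D, hD, hz⟩ := exists_int_scale lam
  choose u hu using hz
  have hu0 : ∀ k, 0 ≤ u k := by
    intro k
    have : (0:ℚ) ≤ (u k : ℚ) := by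
      rw [hu k]
      have hDQ : (0:ℚ) ≤ (D:ℚ) := by exact_mod_cast hD.le
      exact mul_nonneg hDQ (hnn k)
    exact_mod_cast this
  have hurel : ∑ k, u k • a k = 0 := by
    apply int_rel_of_rat_rel
    have heq : ∑ k, ((u k : ℚ)) • castQ a k = (D:ℚ) • ∑ k, lam k • castQ a k := by
      rw [Finset.smul_sum]
      exact Finset.sum_congr rfl fun k _ => by rw [hu k, mul_smul]
    rw [heq, hrel, smul_zero]
  have husat : u ∈ satSet L := (hA u).mpr hurel
  obtain ⟨d, hd0, hdL⟩ := husat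
  have hdu : ∃ e : ℤ, 0 < e ∧ e • u ∈ L := by
    rcases lt_trichotomy d 0 with hneg | hzer | hpos
    · exact ⟨-d, by linarith, by rw [neg_smul]; exact neg_mem hdL⟩
    · exact absurd hzer hd0
    · exact ⟨d, hpos, hdL⟩
  obtain ⟨e, he0, heL⟩ := hdu
  have hzero : e • u = 0 := hLpos _ heL (fun i => by
    have : (0:ℤ) ≤ u i := hu0 i
    have : (0:ℤ) ≤ e * u i := mul_nonneg he0.le this
    simpa using this)
  have hu00 : u k = 0 := by
    have := congrFun hzero k
    simp only [Pi.smul_apply, smul_eq_mul, Pi.zero_apply] at this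
    rcases mul_eq_zero.mp this with h1 | h2
    · exact absurd h1 he0.ne'
    · exact h2
  have : (D:ℚ) * lam k = 0 := by rw [← hu k, hu00]; simp
  rcases mul_eq_zero.mp this with h1 | h2
  · exact absurd h1 (by exact_mod_cast hD.ne')
  · exact h2

end Witness



section WitnessFace
variable {n m t : ℕ}

lemma witness_of_not_face
    (L : AddSubgroup (Fin n → ℤ))
    (hLpos : ∀ u ∈ L, (∀ i, 0 ≤ u i) → u = (0 : Fin n → ℤ))
    (a : Fin n → Fin m → ℤ)
    (hA : ∀ u : Fin n → ℤ, u ∈ satSet L ↔ ∑ i, u i • a i = 0)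
    (rvec : Fin t → Fin m → ℤ)
    (hr0 : ∀ i, castQ rvec i ≠ 0)
    (hray : ∀ i, IsFaceOf (posQ (castQ a)) (rayOf (castQ rvec i)))
    (hspan : posQ (castQ a) = posQ (castQ rvec))
    (Ej : Finset (Fin t))
    (hface_not : ¬ IsFaceOf (posQ (castQ a)) (posE (castQ rvec) Ej)) :
    ∃ (β : Fin n → ℚ) (k0 : Fin n), (∀ k, 0 ≤ β k) ∧
      (∑ k, β k • castQ a k) ∈ posE (castQ rvec) Ej ∧ 0 < β k0 ∧
      castQ a k0 ∉ posE (castQ rvec) Ej := by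
  classical
  by_contra hno
  push_neg at hno
  apply hface_not
  set aQ := castQ a with haQ
  set rQ := castQ rvec with hrQ
  set V := Submodule.span ℚ
    (Set.range (fun k : {k : Fin n // aQ k ∈ posE rQ Ej} => aQ k.1)) with hV
  have haQV : ∀ k : Fin n, aQ k ∈ posE rQ Ej → aQ k ∈ V := fun k hk =>
    Submodule.subset_span ⟨⟨k, hk⟩, rfl⟩
  -- sum splitting helper
  have hsplit : ∀ g : Fin n → Fin m → ℚ,
      ∑ k, g k = (∑ k : {k : Fin n // aQ k ∈ posE rQ Ej}, g k.1)
        + ∑ k : {k : Fin n // aQ k ∉ posE rQ Ej}, g k.1 := by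
    intro g
    rw [← Finset.sum_filter_add_sum_filter_not Finset.univ (fun k => aQ k ∈ posE rQ Ej) g]
    congr 1
    · exact Finset.sum_subtype _ (by simp) g
    · exact Finset.sum_subtype _ (by simp) g
  obtain ⟨c, hcV, hcpos⟩ := gordan_subspace
      (ι := {k : Fin n // aQ k ∉ posE rQ Ej}) (fun k => aQ k.1) V (by
    intro lam hnn hmem
    rw [hV, Submodule.mem_span_range_iff_exists_fun] at hmem
    obtain ⟨μ, hμ⟩ := hmem
    set β : Fin n → ℚ := fun k =>
      if h : aQ k ∈ posE rQ Ej then max (-(μ ⟨k, h⟩)) 0 else lam ⟨k, h⟩ with hβ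
    have hβnn : ∀ k, 0 ≤ β k := by
      intro k
      rw [hβ]
      dsimp only
      split
      · exact le_max_right _ _
      · exact hnn _
    have hβsum : ∑ k, β k • aQ k ∈ posE rQ Ej := by
      have h1 : ∑ k, β k • aQ k
          = (∑ k : {k : Fin n // aQ k ∈ posE rQ Ej}, max (-(μ k)) 0 • aQ k.1)
            + ∑ k : {k : Fin n // aQ k ∉ posE rQ Ej}, lam k • aQ k.1 := by
        rw [hsplit (fun k => β k • aQ k)]
        congr 1
        · refine Finset.sum_congr rfl fun k _ => ?_
          rw [hβ]; dsimp only; rw [dif_pos k.2]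
        · refine Finset.sum_congr rfl fun k _ => ?_
          rw [hβ]; dsimp only; rw [dif_neg k.2]
      rw [h1, ← hμ]
      have h2 : ∀ k : {k : Fin n // aQ k ∈ posE rQ Ej},
          max (-(μ k)) 0 • aQ k.1 + μ k • aQ k.1 = max (μ k) 0 • aQ k.1 := by
        intro k
        rw [← add_smul]
        congr 1
        rcases le_total (μ k) 0 with h | h
        · rw [max_eq_left (by linarith), max_eq_right h]; ring
        · rw [max_eq_right (by linarith), max_eq_left h]; ring
      rw [show (∑ k : {k : Fin n // aQ k ∈ posE rQ Ej}, max (-(μ k)) 0 • aQ k.1)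
            + ∑ k : {k : Fin n // aQ k ∈ posE rQ Ej}, μ k • aQ k.1
          = ∑ k : {k : Fin n // aQ k ∈ posE rQ Ej},
              (max (-(μ k)) 0 • aQ k.1 + μ k • aQ k.1) from
        (Finset.sum_add_distrib).symm]
      rw [Finset.sum_congr rfl fun k _ => h2 k]
      exact sum_smul_mem_posE _ _ _ (fun k _ => le_max_right _ _) (fun k _ => k.2)
    intro k1
    by_contra hlam
    have hpos : 0 < lam k1 := lt_of_le_of_ne (hnn k1) (Ne.symm hlam)
    have hβk1 : 0 < β k1.1 := by
      rw [hβ]; dsimp only; rw [dif_neg k1.2]; exact hpos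
    exact k1.2 (hno β k1.1 hβnn hβsum hβk1))
  -- now build the face
  have hdotnn : ∀ k, 0 ≤ ∑ j, c j * aQ k j := by
    intro k
    by_cases hk : aQ k ∈ posE rQ Ej
    · rw [hcV _ (haQV k hk)]
    · exact (hcpos ⟨k, hk⟩).le
  refine ⟨c, ?_, ?_⟩
  · rintro x ⟨d, hd, rfl⟩
    rw [dot_sum_smul]
    exact Finset.sum_nonneg fun k _ => mul_nonneg (hd k) (hdotnn k)
  · apply Set.ext
    intro x
    constructor
    · intro hx
      have hxσ : x ∈ posQ aQ := by
        rw [haQ, hspan]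
        exact posE_subset_posQ rQ Ej hx
      refine ⟨hxσ, ?_⟩
      obtain ⟨d, hd, hdE, rfl⟩ := hx
      show ∑ j, c j * (∑ i, d i • rQ i) j = 0
      rw [dot_sum_smul]
      refine Finset.sum_eq_zero fun i _ => ?_
      by_cases hi : i ∈ Ej
      · obtain ⟨k, q, hq, hak⟩ := exists_a_on_ray hr0 hray hspan i
        have hakτ : aQ k ∈ posE rQ Ej := by
          rw [haQ, hak]
          exact smul_mem_posE hq.le (gen_mem_posE hi)
        have hrV : rQ i ∈ V := by
          have h3 : rQ i = q⁻¹ • aQ k := by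
            rw [haQ, hak, smul_smul, inv_mul_cancel₀ hq.ne', one_smul]
          rw [h3]
          exact Submodule.smul_mem V _ (haQV k hakτ)
        rw [hcV _ hrV, mul_zero]
      · rw [hdE i hi, zero_mul]
    · rintro ⟨hxσ, hxdot⟩
      obtain ⟨d, hd, rfl⟩ := hxσ
      have hdot0 : ∑ k, d k * ∑ j, c j * aQ k j = 0 := by
        rw [← dot_sum_smul]
        exact hxdot
      have hall := (Finset.sum_eq_zero_iff_of_nonneg
        (fun k _ => mul_nonneg (hd k) (hdotnn k))).mp hdot0
      have heq : ∑ k, d k • aQ k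
          = ∑ k, d k • (if aQ k ∈ posE rQ Ej then aQ k else 0) := by
        refine Finset.sum_congr rfl fun k _ => ?_
        by_cases hk : aQ k ∈ posE rQ Ej
        · rw [if_pos hk]
        · rw [if_neg hk]
          have hdk : d k = 0 := by
            have := hall k (Finset.mem_univ k)
            rcases mul_eq_zero.mp this with h1 | h2
            · exact h1
            · exact absurd h2 (ne_of_gt (hcpos ⟨k, hk⟩))
          rw [hdk, zero_smul, zero_smul]
      rw [heq]
      refine sum_smul_mem_posE _ _ _ (fun k _ => hd k) fun k _ => ?_
      split
      · assumption
      · exact zero_mem_posE rQ Ej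

end WitnessFace



section Algebra
open AddMonoidAlgebra
open scoped Classical
variable {K : Type*} [Field K] {n m : ℕ}

/-- the `A`-degree of an exponent vector. -/
def degA (a : Fin n → Fin m → ℤ) (N : Fin n →₀ ℕ) : Fin m → ℤ := ∑ k, (N k : ℤ) • a k

/-- evaluation sending `x_k` to the Laurent monomial `y^{a_k}` for `k ∈ S`, and to `0`
otherwise. -/
noncomputable def phiS (K : Type*) [Field K] (a : Fin n → Fin m → ℤ) (S : Set (Fin n)) :
    MvPolynomial (Fin n) K →+* AddMonoidAlgebra K (Fin m → ℤ) :=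
  MvPolynomial.eval₂Hom (algebraMap K (AddMonoidAlgebra K (Fin m → ℤ)))
    (fun k => if k ∈ S then AddMonoidAlgebra.single (a k) 1 else 0)

lemma phiS_monomial (a : Fin n → Fin m → ℤ) (S : Set (Fin n)) (N : Fin n →₀ ℕ) (co : K) :
    phiS K a S (MvPolynomial.monomial N co) =
      if ∀ k ∈ N.support, k ∈ S then AddMonoidAlgebra.single (degA a N) co else 0 := by
  classical
  rw [phiS, MvPolynomial.eval₂Hom_monomial]
  by_cases hall : ∀ k ∈ N.support, k ∈ S
  · rw [if_pos hall]
    have hprod : (N.prod fun k e =>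
        (if k ∈ S then AddMonoidAlgebra.single (a k) (1:K) else 0) ^ e)
        = AddMonoidAlgebra.single (degA a N) 1 := by
      rw [Finsupp.prod]
      have : ∀ k ∈ N.support,
          (if k ∈ S then AddMonoidAlgebra.single (a k) (1:K) else 0) ^ N k
          = AddMonoidAlgebra.single ((N k : ℤ) • a k) 1 := by
        intro k hk
        rw [if_pos (hall k hk), AddMonoidAlgebra.single_pow, one_pow, natCast_zsmul]
      rw [Finset.prod_congr rfl this, AddMonoidAlgebra.prod_single, Finset.prod_const_one]
      congr 1
      rw [degA]
      rw [Finset.sum_subset (Finset.subset_univ N.support)]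
      intro k _ hk
      rw [Finsupp.notMem_support_iff.mp hk]
      simp
    rw [hprod, AddMonoidAlgebra.coe_algebraMap]
    simp only [Function.comp_apply, Algebra.algebraMap_self, RingHom.id_apply]
    rw [AddMonoidAlgebra.single_mul_single, zero_add, mul_one]
  · rw [if_neg hall]
    push_neg at hall
    obtain ⟨k0, hk0, hk0S⟩ := hall
    have : (N.prod fun k e =>
        (if k ∈ S then AddMonoidAlgebra.single (a k) (1:K) else 0) ^ e) = 0 := by
      rw [Finsupp.prod]
      apply Finset.prod_eq_zero hk0
      rw [if_neg hk0S, zero_pow]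
      exact Finsupp.mem_support_iff.mp hk0
    rw [this, mul_zero]

lemma phiS_coeff (a : Fin n → Fin m → ℤ) (S : Set (Fin n)) (G : MvPolynomial (Fin n) K)
    (β : Fin m → ℤ) :
    (phiS K a S G).coeff β = ∑ N ∈ G.support,
      (if (∀ k ∈ N.support, k ∈ S) ∧ degA a N = β then G.coeff N else 0) := by
  classical
  conv_lhs => rw [G.as_sum, map_sum]
  rw [AddMonoidAlgebra.coeff_sum, Finsupp.finset_sum_apply]
  refine Finset.sum_congr rfl fun N _ => ?_
  rw [phiS_monomial]
  by_cases h1 : ∀ k ∈ N.support, k ∈ S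
  · rw [if_pos h1]
    rw [AddMonoidAlgebra.coeff_single, Finsupp.single_apply]
    by_cases h2 : degA a N = β
    · rw [if_pos h2, if_pos ⟨h1, h2⟩]
    · rw [if_neg h2, if_neg (fun hc => h2 hc.2)]
  · rw [if_neg h1, if_neg (fun hc => h1 hc.1)]
    rfl

end Algebra



section Vanishing
open AddMonoidAlgebra
open scoped Classical
variable {K : Type*} [Field K] {n m : ℕ}

lemma dot_degA (c : Fin m → ℚ) (a : Fin n → Fin m → ℤ) (N : Fin n →₀ ℕ) :
    ∑ j, c j * ((degA a N j : ℤ) : ℚ) = ∑ k, (N k : ℚ) * ∑ j, c j * castQ a k j := by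
  simp only [degA, Finset.sum_apply, Pi.smul_apply, smul_eq_mul, castQ]
  push_cast
  simp only [Finset.mul_sum]
  rw [Finset.sum_comm]
  refine Finset.sum_congr rfl fun k _ => Finset.sum_congr rfl fun j _ => by ring

lemma _root_.posPart_apply (u : Fin n → ℤ) (k : Fin n) : _root_.posPart u k = (u k).toNat := by
  simp [_root_.posPart]

lemma mem_support_posPart {u : Fin n → ℤ} {k : Fin n} :
    k ∈ (_root_.posPart u).support ↔ 0 < u k := by
  rw [Finsupp.mem_support_iff, _root_.posPart_apply]
  omega

lemma degA_posPart (a : Fin n → Fin m → ℤ) (w : Fin n → ℤ) (hw : ∑ k, w k • a k = 0) :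
    degA a (_root_.posPart w) = degA a (_root_.posPart (-w)) := by
  funext j
  have h0 : ∑ k, w k * a k j = 0 := by
    have := congrFun hw j
    simpa [Finset.sum_apply, Pi.smul_apply, smul_eq_mul] using this
  have hsub : ∀ k : Fin n, ((_root_.posPart w) k : ℤ) * a k j - ((_root_.posPart (-w)) k : ℤ) * a k j
      = w k * a k j := by
    intro k
    rw [_root_.posPart_apply, _root_.posPart_apply]
    have hh : ((w k).toNat : ℤ) - (((-w) k).toNat : ℤ) = w k := Int.toNat_sub_toNat_neg (w k)
    linear_combination a k j * hh
  have : (∑ k, ((_root_.posPart w) k : ℤ) * a k j) - ∑ k, ((_root_.posPart (-w)) k : ℤ) * a k j = 0 := by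
    rw [← Finset.sum_sub_distrib, Finset.sum_congr rfl (fun k _ => hsub k), h0]
  simp only [degA, Finset.sum_apply, Pi.smul_apply, smul_eq_mul]
  linarith

lemma phiS_latticeIdeal (L : AddSubgroup (Fin n → ℤ)) (a : Fin n → Fin m → ℤ)
    (hA : ∀ u : Fin n → ℤ, u ∈ satSet L ↔ ∑ i, u i • a i = 0)
    (c : Fin m → ℚ) (hcnn : ∀ k, 0 ≤ ∑ j, c j * castQ a k j)
    {G : MvPolynomial (Fin n) K} (hG : G ∈ latticeIdeal K L) :
    phiS K a {k | ∑ j, c j * castQ a k j = 0} G = 0 := by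
  set S : Set (Fin n) := {k | ∑ j, c j * castQ a k j = 0} with hS
  have hker : latticeIdeal K L ≤ RingHom.ker (phiS K a S) := by
    rw [latticeIdeal, Ideal.span_le]
    rintro g ⟨w, hwL, rfl⟩
    rw [SetLike.mem_coe, RingHom.mem_ker, map_sub, phiS_monomial, phiS_monomial]
    have hAw : ∑ k, w k • a k = 0 := (hA w).mp ⟨1, one_ne_zero, by simpa using hwL⟩
    have hdeg := degA_posPart a w hAw
    have hQD : ∑ k, (((_root_.posPart w) k : ℕ) : ℚ) * ∑ j, c j * castQ a k j
        = ∑ k, (((_root_.posPart (-w)) k : ℕ) : ℚ) * ∑ j, c j * castQ a k j := by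
      rw [← dot_degA c a (_root_.posPart w), ← dot_degA c a (_root_.posPart (-w)), hdeg]
    have hQDzero : ∀ (N : Fin n →₀ ℕ), (∀ k ∈ N.support, k ∈ S) →
        ∑ k, ((N k : ℕ) : ℚ) * ∑ j, c j * castQ a k j = 0 := by
      intro N hN
      refine Finset.sum_eq_zero fun k _ => ?_
      by_cases hk : k ∈ N.support
      · rw [hN k hk, mul_zero]
      · rw [Finsupp.notMem_support_iff.mp hk]
        simp
    have hQDpos : ∀ (N : Fin n →₀ ℕ), ¬(∀ k ∈ N.support, k ∈ S) →
        0 < ∑ k, ((N k : ℕ) : ℚ) * ∑ j, c j * castQ a k j := by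
      intro N hN
      push_neg at hN
      obtain ⟨k1, hk1, hk1S⟩ := hN
      have hdotpos : 0 < ∑ j, c j * castQ a k1 j :=
        lt_of_le_of_ne (hcnn k1) (Ne.symm hk1S)
      have hterm : 0 < ((N k1 : ℕ) : ℚ) * ∑ j, c j * castQ a k1 j := by
        have : 0 < N k1 := Nat.pos_of_ne_zero (Finsupp.mem_support_iff.mp hk1)
        have h2 : (0:ℚ) < ((N k1 : ℕ) : ℚ) := by exact_mod_cast this
        exact mul_pos h2 hdotpos
      have hle := Finset.single_le_sum
        (f := fun k => ((N k : ℕ) : ℚ) * ∑ j, c j * castQ a k j)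
        (fun k _ => mul_nonneg (by positivity) (hcnn k)) (Finset.mem_univ k1)
      linarith
    by_cases h1 : ∀ k ∈ (_root_.posPart w).support, k ∈ S
      <;> by_cases h2 : ∀ k ∈ (_root_.posPart (-w)).support, k ∈ S
    · rw [if_pos h1, if_pos h2, hdeg, sub_self]
    · exfalso
      have := hQDpos _ h2
      rw [← hQD, hQDzero _ h1] at this
      exact lt_irrefl 0 this
    · exfalso
      have := hQDpos _ h1
      rw [hQD, hQDzero _ h2] at this
      exact lt_irrefl 0 this
    · rw [if_neg h1, if_neg h2, sub_self]
  exact hker hG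

lemma phiS_radical (L : AddSubgroup (Fin n → ℤ)) (a : Fin n → Fin m → ℤ)
    (hA : ∀ u : Fin n → ℤ, u ∈ satSet L ↔ ∑ i, u i • a i = 0)
    (c : Fin m → ℚ) (hcnn : ∀ k, 0 ≤ ∑ j, c j * castQ a k j)
    {G : MvPolynomial (Fin n) K} (hG : G ∈ (latticeIdeal K L).radical) :
    phiS K a {k | ∑ j, c j * castQ a k j = 0} G = 0 := by
  obtain ⟨e, he⟩ := Ideal.mem_radical_iff.mp hG
  have h0 := phiS_latticeIdeal L a hA c hcnn (K := K) he
  rw [map_pow] at h0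
  rcases Nat.eq_zero_or_pos e with rfl | he0
  · exfalso
    rw [pow_zero] at h0
    exact one_ne_zero h0
  · exact (pow_eq_zero_iff he0.ne').mp h0

end Vanishing



section MainClaim
open AddMonoidAlgebra
open scoped Classical
variable {K : Type*} [Field K] {n m t : ℕ}

/-- dot is additive in the functional over a finite sum. -/
lemma dot_sum_left {ι : Type*} (s : Finset ι) (cf : ι → Fin m → ℚ) (x : Fin m → ℚ) :
    ∑ j, (∑ N ∈ s, cf N) j * x j = ∑ N ∈ s, ∑ j, (cf N) j * x j := by
  simp only [Finset.sum_apply, Finset.sum_mul]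
  exact Finset.sum_comm

variable (a : Fin n → Fin m → ℤ) (rvec : Fin t → Fin m → ℤ)

/-- each coordinate subcone `σ(𝔼_j \ {i0})` of a minimal non-face is a face. -/
lemma erase_is_face
    (hr0 : ∀ i, castQ rvec i ≠ 0)
    (hray : ∀ i, IsFaceOf (posQ (castQ a)) (rayOf (castQ rvec i)))
    (hrinj : ∀ i j : Fin t, rayOf (castQ rvec i) = rayOf (castQ rvec j) → i = j)
    (hspan : posQ (castQ a) = posQ (castQ rvec))
    (Ej : Finset (Fin t))
    (hE2j : ∀ E : Finset (Fin t),
      ¬ IsFaceOf (posQ (castQ a)) (posE (castQ rvec) E) →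
      posE (castQ rvec) E ⊆ posE (castQ rvec) Ej →
      posE (castQ rvec) E = posE (castQ rvec) Ej)
    {i0 : Fin t} (hi0 : i0 ∈ Ej) :
    IsFaceOf (posQ (castQ a)) (posE (castQ rvec) (Ej.erase i0)) := by
  by_contra hnf
  have hsub : posE (castQ rvec) (Ej.erase i0) ⊆ posE (castQ rvec) Ej :=
    posE_mono (Finset.erase_subset i0 Ej)
  have heq := hE2j _ hnf hsub
  have : castQ rvec i0 ∈ posE (castQ rvec) (Ej.erase i0) := by
    rw [heq]; exact gen_mem_posE hi0
  have := index_mem_of_gen_mem hr0 hray hrinj hspan this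
  exact (Finset.notMem_erase i0 Ej) this

/-- Lemma A: a monomial supported in the boundary set `Kτ` whose cone is not all of
`σ(𝔼_j)` has all its `a_k` inside a single coordinate facet `σ(𝔼_j \ {i0})`. -/
lemma bad_monomial_in_facet
    (hr0 : ∀ i, castQ rvec i ≠ 0)
    (hray : ∀ i, IsFaceOf (posQ (castQ a)) (rayOf (castQ rvec i)))
    (hrinj : ∀ i j : Fin t, rayOf (castQ rvec i) = rayOf (castQ rvec j) → i = j)
    (hspan : posQ (castQ a) = posQ (castQ rvec))
    (Ej : Finset (Fin t))
    (hE2j : ∀ E : Finset (Fin t),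
      ¬ IsFaceOf (posQ (castQ a)) (posE (castQ rvec) E) →
      posE (castQ rvec) E ⊆ posE (castQ rvec) Ej →
      posE (castQ rvec) E = posE (castQ rvec) Ej)
    (N : Fin n →₀ ℕ)
    (hKτ : ∀ k ∈ N.support, ∃ i ∈ Ej, castQ a k ∈ posE (castQ rvec) (Ej.erase i))
    (hbad : coneOf (castQ a) (castQ rvec) N ≠ posE (castQ rvec) Ej) :
    ∃ i0 ∈ Ej, ∀ k ∈ N.support, castQ a k ∈ posE (castQ rvec) (Ej.erase i0) := by
  set aQ := castQ a with haQ
  set rQ := castQ rvec with hrQ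
  have hAN : ∀ k ∈ N.support, aQ k ∈ posE rQ Ej := by
    intro k hk
    obtain ⟨i, _, hi⟩ := hKτ k hk
    exact posE_mono (Finset.erase_subset i Ej) hi
  have hconesub : coneOf aQ rQ N ⊆ posE rQ Ej := by
    intro x hx
    simp only [coneOf, Set.mem_iInter] at hx
    exact hx Ej hAN
  have hnotsub : ¬ (posE rQ Ej ⊆ coneOf aQ rQ N) := by
    intro hc
    exact hbad (Set.Subset.antisymm hconesub hc)
  obtain ⟨x, hxτ, hxnot⟩ := Set.not_subset.mp hnotsub
  have hE0 : ∃ E0 : Finset (Fin t), (∀ k ∈ N.support, aQ k ∈ posE rQ E0)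
      ∧ x ∉ posE rQ E0 := by
    simp only [coneOf, Set.mem_iInter] at hxnot
    push_neg at hxnot
    obtain ⟨E0, hE0f, hE0x⟩ := hxnot
    exact ⟨E0, hE0f, hE0x⟩
  obtain ⟨E0, hE0f, hE0x⟩ := hE0
  have hi0 : ∃ i0 ∈ Ej, rQ i0 ∉ posE rQ E0 := by
    by_contra hc
    push_neg at hc
    exact hE0x (posE_subset_of_gens (fun i hi => hc i hi) hxτ)
  obtain ⟨i0, hi0Ej, hi0not⟩ := hi0
  refine ⟨i0, hi0Ej, fun k hk => ?_⟩
  obtain ⟨d, hd, hdE0, hrep⟩ := hE0f k hk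
  obtain ⟨ik, hikEj, hikmem⟩ := hKτ k hk
  obtain ⟨ck, hcknn, hckeq⟩ := erase_is_face a rvec hr0 hray hrinj hspan Ej hE2j hikEj
  have hdotk : ∑ j, ck j * aQ k j = 0 := by
    have : aQ k ∈ posQ aQ ∩ {x | ∑ j, ck j * x j = 0} := by
      rw [← hckeq]; exact hikmem
    exact this.2
  have hterms : ∀ i, d i ≠ 0 → ∑ j, ck j * rQ i j = 0 := by
    intro i hdi
    have hexp : ∑ i, d i * ∑ j, ck j * rQ i j = 0 := by
      rw [← dot_sum_smul ck Finset.univ d rQ, ← hrep, hdotk]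
    have hnn : ∀ i' ∈ Finset.univ, 0 ≤ d i' * ∑ j, ck j * rQ i' j := fun i' _ =>
      mul_nonneg (hd i') (hcknn _ (hspan ▸ mem_posQ rQ i'))
    have := (Finset.sum_eq_zero_iff_of_nonneg hnn).mp hexp i (Finset.mem_univ i)
    rcases mul_eq_zero.mp this with h1 | h2
    · exact absurd h1 hdi
    · exact h2
  have hray_in : ∀ i, d i ≠ 0 → i ∈ Ej.erase ik := by
    intro i hdi
    have : rQ i ∈ posE rQ (Ej.erase ik) := by
      rw [hckeq]
      exact ⟨hspan ▸ mem_posQ rQ i, hterms i hdi⟩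
    exact index_mem_of_gen_mem hr0 hray hrinj hspan this
  have hne_i0 : ∀ i, d i ≠ 0 → i ≠ i0 := by
    intro i hdi hii0
    apply hi0not
    rw [← hii0]
    exact gen_mem_posE (by
      by_contra hiE0
      exact hdi (hdE0 i hiE0))
  refine ⟨d, hd, fun i hi => ?_, hrep⟩
  by_contra hdi
  apply hi
  rw [Finset.mem_erase]
  exact ⟨hne_i0 i hdi, Finset.mem_of_mem_erase (hray_in i hdi)⟩

/-- MAIN CLAIM: a polynomial in the radical of the lattice ideal none of whose monomials
has cone `σ(𝔼_j)` vanishes at the boundary point of `σ(𝔼_j)`. -/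
lemma main_claim
    (L : AddSubgroup (Fin n → ℤ))
    (hA : ∀ u : Fin n → ℤ, u ∈ satSet L ↔ ∑ i, u i • a i = 0)
    (hr0 : ∀ i, castQ rvec i ≠ 0)
    (hray : ∀ i, IsFaceOf (posQ (castQ a)) (rayOf (castQ rvec i)))
    (hrinj : ∀ i j : Fin t, rayOf (castQ rvec i) = rayOf (castQ rvec j) → i = j)
    (hspan : posQ (castQ a) = posQ (castQ rvec))
    (Ej : Finset (Fin t))
    (hE2j : ∀ E : Finset (Fin t),
      ¬ IsFaceOf (posQ (castQ a)) (posE (castQ rvec) E) →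
      posE (castQ rvec) E ⊆ posE (castQ rvec) Ej →
      posE (castQ rvec) E = posE (castQ rvec) Ej)
    (G : MvPolynomial (Fin n) K)
    (hG : G ∈ (latticeIdeal K L).radical)
    (hbad : ∀ N ∈ G.support, coneOf (castQ a) (castQ rvec) N ≠ posE (castQ rvec) Ej) :
    phiS K a {k | ∃ i ∈ Ej, castQ a k ∈ posE (castQ rvec) (Ej.erase i)} G = 0 := by
  set aQ := castQ a with haQ
  set rQ := castQ rvec with hrQ
  set Kτ : Set (Fin n) := {k | ∃ i ∈ Ej, aQ k ∈ posE rQ (Ej.erase i)} with hKτdef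
  apply AddMonoidAlgebra.ext
  apply Finsupp.ext
  intro β
  rw [AddMonoidAlgebra.coeff_zero, Finsupp.zero_apply, phiS_coeff]
  set T := G.support.filter (fun N => (∀ k ∈ N.support, k ∈ Kτ) ∧ degA a N = β) with hT
  rcases T.eq_empty_or_nonempty with hTe | hTne
  · refine Finset.sum_eq_zero fun N hN => ?_
    rw [if_neg]
    intro hc
    have : N ∈ T := Finset.mem_filter.mpr ⟨hN, hc⟩
    rw [hTe] at this
    exact absurd this (Finset.notMem_empty N)
  · obtain ⟨N0, hN0⟩ := hTne
    -- choose a supporting functional for each contributing monomial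
    have hchoice : ∀ N ∈ T, ∃ c' : Fin m → ℚ,
        (∀ k : Fin n, 0 ≤ ∑ j, c' j * aQ k j) ∧
        (∀ k ∈ N.support, ∑ j, c' j * aQ k j = 0) ∧
        (∀ k : Fin n, (∑ j, c' j * aQ k j) = 0 → k ∈ Kτ) := by
      intro N hN
      obtain ⟨hNsupp, hNdeg⟩ := (Finset.mem_filter.mp hN).2
      obtain ⟨i0, hi0Ej, hfacet⟩ := bad_monomial_in_facet a rvec hr0 hray hrinj hspan Ej
        hE2j N hNsupp (hbad N (Finset.mem_filter.mp hN).1)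
      obtain ⟨c', hc'nn, hc'eq⟩ := erase_is_face a rvec hr0 hray hrinj hspan Ej hE2j hi0Ej
      refine ⟨c', fun k => hc'nn _ (mem_posQ aQ k), fun k hk => ?_, fun k hk0 => ?_⟩
      · have : aQ k ∈ posQ aQ ∩ {x | ∑ j, c' j * x j = 0} := by
          rw [← hc'eq]; exact hfacet k hk
        exact this.2
      · have : aQ k ∈ posE rQ (Ej.erase i0) := by
          rw [hc'eq]; exact ⟨mem_posQ aQ k, hk0⟩
        exact ⟨i0, hi0Ej, this⟩
    choose cf hcf1 hcf2 hcf3 using hchoice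
    set c : Fin m → ℚ := ∑ N ∈ T.attach, cf N.1 N.2 with hc
    have hdotc : ∀ x : Fin m → ℚ, ∑ j, c j * x j = ∑ N ∈ T.attach, ∑ j, (cf N.1 N.2) j * x j := by
      intro x
      rw [hc, dot_sum_left]
    have hcnn : ∀ k, 0 ≤ ∑ j, c j * aQ k j := by
      intro k
      rw [hdotc]
      exact Finset.sum_nonneg fun N _ => hcf1 N.1 N.2 k
    have hβdot : ∀ P : {x // x ∈ T}, ∑ j, (cf P.1 P.2) j * ((β j : ℤ) : ℚ) = 0 := by
      intro P
      have hdegP : degA a P.1 = β := (Finset.mem_filter.mp P.2).2.2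
      rw [← hdegP, dot_degA]
      refine Finset.sum_eq_zero fun k _ => ?_
      by_cases hk : k ∈ P.1.support
      · rw [hcf2 P.1 P.2 k hk, mul_zero]
      · rw [Finsupp.notMem_support_iff.mp hk]
        simp
    have hcβ : ∑ j, c j * ((β j : ℤ) : ℚ) = 0 := by
      rw [hdotc]
      exact Finset.sum_eq_zero fun P _ => hβdot P
    have hcond : ∀ N ∈ G.support, (((∀ k ∈ N.support, k ∈ Kτ) ∧ degA a N = β)
        ↔ ((∀ k ∈ N.support, k ∈ {k : Fin n | ∑ j, c j * castQ a k j = 0})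
            ∧ degA a N = β)) := by
      intro N hN
      constructor
      · rintro ⟨h1, h2⟩
        refine ⟨?_, h2⟩
        have hexp : ∑ k, ((N k : ℕ) : ℚ) * ∑ j, c j * aQ k j = 0 := by
          rw [← dot_degA c a N, h2]
          exact hcβ
        intro k hk
        have hterm := (Finset.sum_eq_zero_iff_of_nonneg
          (fun k' _ => mul_nonneg (by positivity) (hcnn k'))).mp hexp k (Finset.mem_univ k)
        have hNk : (0:ℚ) < ((N k : ℕ) : ℚ) := by
          exact_mod_cast Nat.pos_of_ne_zero (Finsupp.mem_support_iff.mp hk)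
        rcases mul_eq_zero.mp hterm with hx | hx
        · exact absurd hx hNk.ne'
        · exact hx
      · rintro ⟨h1, h2⟩
        refine ⟨fun k hk => ?_, h2⟩
        have h0 : ∑ j, c j * aQ k j = 0 := h1 k hk
        rw [hdotc] at h0
        have := (Finset.sum_eq_zero_iff_of_nonneg
          (fun P _ => hcf1 P.1 P.2 k)).mp h0 ⟨N0, hN0⟩ (Finset.mem_attach T _)
        exact hcf3 N0 hN0 k this
    have hphiSc := phiS_radical L a hA c hcnn (K := K) hG
    have h2 : (phiS K a {k : Fin n | ∑ j, c j * castQ a k j = 0} G).coeff β = 0 := by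
      rw [hphiSc, AddMonoidAlgebra.coeff_zero, Finsupp.zero_apply]
    rw [phiS_coeff] at h2
    refine Eq.trans ?_ h2
    refine Finset.sum_congr rfl fun N hN => ?_
    by_cases hx : (∀ k ∈ N.support, k ∈ Kτ) ∧ degA a N = β
    · rw [if_pos hx, if_pos ((hcond N hN).mp hx)]
    · have hx2 : ¬((∀ k ∈ N.support, k ∈ {k : Fin n | ∑ j, c j * castQ a k j = 0})
          ∧ degA a N = β) := fun hc => hx ((hcond N hN).mpr hc)
      rw [if_neg hx, if_neg hx2]

end MainClaim


/-- if `F₁,…,Fₛ` generate `rad(I_L)` up to radical, then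
`⋃ᵢ D_{L'}^L(Fᵢ)` is a spanning subcomplex of `D_{L'}^L`: every vertex `𝔼ⱼ` is a vertex
of some `D_{L'}^L(Fᵢ)`, i.e. some monomial of some `Fᵢ` has cone `σ(𝔼ⱼ)`. -/
theorem stmt14 {K : Type*} [Field K] {n m t f r' s : ℕ}
    (L L' : AddSubgroup (Fin n → ℤ))
    (hLpos : ∀ u ∈ L, (∀ i, 0 ≤ u i) → u = (0 : Fin n → ℤ))
    (hLL' : L ≤ L')
    (a : Fin n → Fin m → ℤ)
    (hA : ∀ u : Fin n → ℤ, u ∈ satSet L ↔ ∑ i, u i • a i = 0)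
    (b : Fin n → Fin r' → ℤ)
    (hB : ∀ u : Fin n → ℤ, u ∈ satSet L' ↔ ∑ i, u i • b i = 0)
    (rvec : Fin t → Fin m → ℤ)
    (hr0 : ∀ i, castQ rvec i ≠ 0)
    (hray : ∀ i, IsFaceOf (posQ (castQ a)) (rayOf (castQ rvec i)))
    (hrinj : ∀ i j : Fin t, rayOf (castQ rvec i) = rayOf (castQ rvec j) → i = j)
    (hspan : posQ (castQ a) = posQ (castQ rvec))
    (𝔼 : Fin f → Finset (Fin t))
    (hE1 : ∀ j : Fin f, ¬ IsFaceOf (posQ (castQ a)) (posE (castQ rvec) (𝔼 j)))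
    (hE2 : ∀ (j : Fin f) (E : Finset (Fin t)),
      ¬ IsFaceOf (posQ (castQ a)) (posE (castQ rvec) E) →
      posE (castQ rvec) E ⊆ posE (castQ rvec) (𝔼 j) →
      posE (castQ rvec) E = posE (castQ rvec) (𝔼 j))
    (hE3 : ∀ E : Finset (Fin t), ¬ IsFaceOf (posQ (castQ a)) (posE (castQ rvec) E) →
      ∃ j : Fin f, posE (castQ rvec) (𝔼 j) ⊆ posE (castQ rvec) E)
    (hEinj : ∀ j k : Fin f, posE (castQ rvec) (𝔼 j) = posE (castQ rvec) (𝔼 k) → j = k)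
    (π : (Fin m → ℚ) →ₗ[ℚ] (Fin r' → ℚ))
    (hπ : ∀ i, π (castQ a i) = castQ b i)
    (F : Fin s → MvPolynomial (Fin n) K)
    (hrad : (latticeIdeal K L).radical = (Ideal.span (Set.range F)).radical) :
    ∀ j : Fin f, ∃ i : Fin s, ∃ u ∈ (F i).support,
      coneOf (castQ a) (castQ rvec) u = posE (castQ rvec) (𝔼 j) := by
  classical
  intro j
  by_contra hcon
  push_neg at hcon
  set aQ := castQ a with haQ
  set rQ := castQ rvec with hrQ
  -- step 1 : 𝔼 j is nonempty
  have hne : (𝔼 j).Nonempty := by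
    rcases Finset.eq_empty_or_nonempty (𝔼 j) with he | h
    · exfalso
      apply hE1 j
      obtain ⟨c, hcV, hcpos⟩ := gordan_subspace (ι := Fin n) (castQ a) ⊥ (by
        intro lam hnn hmem
        rw [Submodule.mem_bot] at hmem
        exact no_nonneg_rel L hLpos a hA lam hnn hmem)
      refine ⟨c, ?_, ?_⟩
      · rintro x ⟨d, hd, rfl⟩
        rw [dot_sum_smul]
        exact Finset.sum_nonneg fun k _ => mul_nonneg (hd k) (hcpos k).le
      · rw [he]
        apply Set.ext
        intro x
        constructor
        · rintro ⟨d, hd, hdE, rfl⟩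
          have hx0 : (∑ i, d i • rQ i) = (0 : Fin m → ℚ) :=
            Finset.sum_eq_zero fun i _ => by
              rw [hdE i (Finset.notMem_empty i), zero_smul]
          rw [hx0]
          refine ⟨⟨0, fun _ => le_rfl, by simp⟩, ?_⟩
          show ∑ j', c j' * (0 : Fin m → ℚ) j' = 0
          simp
        · rintro ⟨⟨d, hd, rfl⟩, hdot⟩
          have h0 : ∑ k, d k * ∑ j', c j' * aQ k j' = 0 := by
            rw [← dot_sum_smul]
            exact hdot
          have hall := (Finset.sum_eq_zero_iff_of_nonneg
            (fun k _ => mul_nonneg (hd k) (hcpos k).le)).mp h0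
          have hd0 : ∀ k, d k = 0 := by
            intro k
            have := hall k (Finset.mem_univ k)
            rcases mul_eq_zero.mp this with h1 | h2
            · exact h1
            · exact absurd h2 (hcpos k).ne'
          have hx0 : (∑ k, d k • aQ k) = (0 : Fin m → ℚ) :=
            Finset.sum_eq_zero fun k _ => by rw [hd0 k, zero_smul]
          rw [hx0]
          exact zero_mem_posE rQ ∅
    · exact h
  -- step 2 : 𝔼 j has at least two elements
  have htwo : ∀ i0 ∈ 𝔼 j, ∃ i1 ∈ 𝔼 j, i1 ≠ i0 := by
    intro i0 hi0
    by_contra hc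
    push_neg at hc
    have hsing : 𝔼 j = {i0} :=
      Finset.eq_singleton_iff_unique_mem.mpr ⟨hi0, fun b hb => hc b hb⟩
    apply hE1 j
    have heqset : rayOf (rQ i0) = posE rQ (𝔼 j) := by
      rw [hsing]
      apply Set.ext
      intro x
      constructor
      · rintro ⟨q, hq, rfl⟩
        exact smul_mem_posE hq (gen_mem_posE (Finset.mem_singleton_self i0))
      · rintro ⟨d, hd, hdE, rfl⟩
        refine ⟨d i0, hd i0, ?_⟩
        rw [Finset.sum_eq_single i0]
        · intro b _ hb
          rw [hdE b (by simp [hb]), zero_smul]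
        · intro hb
          exact absurd (Finset.mem_univ i0) hb
    rw [← heqset]
    exact hray i0
  -- step 3 : a point of A on each extreme ray
  have hkq := fun i => exists_a_on_ray (a := a) (rvec := rvec) hr0 hray hspan i
  choose kf qf hqf hakf using hkq
  have hakfQ : ∀ i, aQ (kf i) = qf i • rQ i := hakf
  set Kτ : Set (Fin n) := {k | ∃ i ∈ 𝔼 j, aQ k ∈ posE rQ ((𝔼 j).erase i)} with hKτ
  have hKτ_sub_τ : ∀ k ∈ Kτ, aQ k ∈ posE rQ (𝔼 j) := by
    rintro k ⟨i, _, hi⟩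
    exact posE_mono (Finset.erase_subset i (𝔼 j)) hi
  have hkfKτ : ∀ i ∈ 𝔼 j, kf i ∈ Kτ := by
    intro i hi
    obtain ⟨i1, hi1, hne1⟩ := htwo i hi
    refine ⟨i1, hi1, ?_⟩
    rw [hakfQ i]
    exact smul_mem_posE (hqf i).le
      (gen_mem_posE (Finset.mem_erase.mpr ⟨fun hEq => hne1 hEq.symm, hi⟩))
  have hakfτ : ∀ i ∈ 𝔼 j, aQ (kf i) ∈ posE rQ (𝔼 j) := fun i hi => by
    rw [hakfQ i]
    exact smul_mem_posE (hqf i).le (gen_mem_posE hi)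
  -- step 4 : witness for non-faceness
  obtain ⟨β, k0, hβnn, hβτ, hβk0, hk0τ⟩ :=
    witness_of_not_face L hLpos a hA rvec hr0 hray hspan (𝔼 j) (hE1 j)
  obtain ⟨γ, hγ, hγE, hxeq⟩ := hβτ
  set α : Fin n → ℚ := fun k => ∑ i ∈ 𝔼 j, (if kf i = k then γ i * (qf i)⁻¹ else 0) with hα
  have hαnn : ∀ k, 0 ≤ α k := by
    intro k
    refine Finset.sum_nonneg fun i _ => ?_
    split
    · exact mul_nonneg (hγ i) (inv_nonneg.mpr (hqf i).le)
    · exact le_rfl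
  have hαsupp : ∀ k, α k ≠ 0 → ∃ i ∈ 𝔼 j, kf i = k := by
    intro k hk
    by_contra hcon2
    push_neg at hcon2
    apply hk
    rw [hα]
    dsimp only
    exact Finset.sum_eq_zero fun i hi => if_neg (hcon2 i hi)
  have hαsum : ∑ k, α k • aQ k = ∑ k, β k • aQ k := by
    have h1 : ∑ k, α k • aQ k = ∑ i ∈ 𝔼 j, (γ i * (qf i)⁻¹) • aQ (kf i) := by
      rw [hα]
      simp only [Finset.sum_smul]
      rw [Finset.sum_comm]
      refine Finset.sum_congr rfl fun i _ => ?_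
      simp only [ite_smul, zero_smul]
      rw [Finset.sum_ite_eq Finset.univ (kf i) (fun k => (γ i * (qf i)⁻¹) • aQ k)]
      simp
    have h2 : ∑ i ∈ 𝔼 j, (γ i * (qf i)⁻¹) • aQ (kf i) = ∑ i ∈ 𝔼 j, γ i • rQ i := by
      refine Finset.sum_congr rfl fun i _ => ?_
      rw [hakfQ i, smul_smul, mul_assoc, inv_mul_cancel₀ (hqf i).ne', mul_one]
    have h3 : ∑ i ∈ 𝔼 j, γ i • rQ i = ∑ i, γ i • rQ i :=
      Finset.sum_subset (Finset.subset_univ _) fun i _ hi => by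
        rw [hγE i hi, zero_smul]
    rw [h1, h2, h3, ← hxeq]
  set u0 : Fin n → ℚ := fun k => α k - β k with hu0
  have hu0rel : ∑ k, u0 k • aQ k = 0 := by
    have : ∀ k, u0 k • aQ k = α k • aQ k - β k • aQ k := fun k => by
      rw [hu0]
      dsimp only
      rw [sub_smul]
    rw [Finset.sum_congr rfl fun k _ => this k, Finset.sum_sub_distrib, hαsum, sub_self]
  obtain ⟨D, hD, hz⟩ := exists_int_scale u0
  choose u1 hu1 using hz
  have hu1rel : ∑ k, u1 k • a k = 0 := by
    apply int_rel_of_rat_rel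
    have hh : ∑ k, ((u1 k : ℚ)) • castQ a k = (D:ℚ) • ∑ k, u0 k • castQ a k := by
      rw [Finset.smul_sum]
      exact Finset.sum_congr rfl fun k _ => by rw [hu1 k, mul_smul]
    rw [hh]
    rw [show castQ a = aQ from rfl, hu0rel, smul_zero]
  obtain ⟨d, hd0, hdL⟩ := (hA u1).mpr hu1rel
  obtain ⟨e, he0, heL⟩ : ∃ e : ℤ, 0 < e ∧ e • u1 ∈ L := by
    rcases lt_trichotomy d 0 with hneg | hzer | hpos
    · exact ⟨-d, by linarith, by rw [neg_smul]; exact neg_mem hdL⟩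
    · exact absurd hzer hd0
    · exact ⟨d, hpos, hdL⟩
  set w : Fin n → ℤ := e • u1 with hwdef
  have hwk : ∀ k, w k = e * u1 k := fun k => rfl
  have hDQ : (0:ℚ) < (D:ℚ) := by exact_mod_cast hD
  have hsign : ∀ k, (0 < w k ↔ 0 < u0 k) ∧ (w k < 0 ↔ u0 k < 0) := by
    intro k
    have hcast : (u1 k : ℚ) = D * u0 k := hu1 k
    have h1 : 0 < u1 k ↔ 0 < u0 k := by
      constructor
      · intro h
        have hq : (0:ℚ) < (u1 k : ℚ) := by exact_mod_cast h
        rw [hcast] at hq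
        nlinarith
      · intro h
        have hq : (0:ℚ) < (D:ℚ) * u0 k := mul_pos hDQ h
        rw [← hcast] at hq
        exact_mod_cast hq
    have h2 : u1 k < 0 ↔ u0 k < 0 := by
      constructor
      · intro h
        have hq : ((u1 k : ℚ)) < 0 := by exact_mod_cast h
        rw [hcast] at hq
        nlinarith
      · intro h
        have hq : (D:ℚ) * u0 k < 0 := mul_neg_of_pos_of_neg hDQ h
        rw [← hcast] at hq
        exact_mod_cast hq
    constructor
    · rw [hwk k]
      constructor
      · intro h
        apply h1.mp
        by_contra hc
        push_neg at hc
        nlinarith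
      · intro h
        exact mul_pos he0 (h1.mpr h)
    · rw [hwk k]
      constructor
      · intro h
        apply h2.mp
        by_contra hc
        push_neg at hc
        nlinarith
      · intro h
        exact mul_neg_of_pos_of_neg he0 (h2.mpr h)
  set B : MvPolynomial (Fin n) K :=
    MvPolynomial.monomial (_root_.posPart w) (1:K)
      - MvPolynomial.monomial (_root_.posPart (-w)) (1:K) with hB
  have hBIL : B ∈ latticeIdeal K L := by
    apply Ideal.subset_span
    exact ⟨w, heL, rfl⟩
  have hsuppw : ∀ k ∈ (_root_.posPart w).support, k ∈ Kτ := by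
    intro k hk
    have hwp : 0 < w k := mem_support_posPart.mp hk
    have hu0p : 0 < u0 k := ((hsign k).1).mp hwp
    have hu0eq : u0 k = α k - β k := rfl
    have hαp : α k ≠ 0 := by
      intro hc
      rw [hu0eq, hc] at hu0p
      nlinarith [hβnn k]
    obtain ⟨i, hi, hkfi⟩ := hαsupp k hαp
    rw [← hkfi]
    exact hkfKτ i hi
  have hαk0 : α k0 = 0 := by
    by_contra hc
    obtain ⟨i, hi, hkfi⟩ := hαsupp k0 hc
    apply hk0τ
    rw [← hkfi]
    exact hakfτ i hi
  have hwk0neg : w k0 < 0 := by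
    apply (hsign k0).2.mpr
    show α k0 - β k0 < 0
    rw [hαk0]
    linarith
  have hk0notKτ : k0 ∉ Kτ := fun hk => hk0τ (hKτ_sub_τ k0 hk)
  have hk0suppm : k0 ∈ (_root_.posPart (-w)).support := by
    rw [mem_support_posPart]
    show 0 < -(w k0)
    linarith
  have hφB : phiS K a Kτ B = AddMonoidAlgebra.single (degA a (_root_.posPart w)) (1:K) := by
    rw [hB, map_sub, phiS_monomial, phiS_monomial,
      if_pos hsuppw, if_neg (fun hall => hk0notKτ (hall k0 hk0suppm)), sub_zero]
  have hBrad : B ∈ (Ideal.span (Set.range F)).radical := by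
    rw [← hrad]
    exact Ideal.le_radical hBIL
  obtain ⟨e2, he2⟩ := Ideal.mem_radical_iff.mp hBrad
  obtain ⟨g, hg⟩ := Ideal.mem_span_range_iff_exists_fun.mp he2
  have hφF : ∀ i, phiS K a Kτ (F i) = 0 := by
    intro i
    have hFrad : F i ∈ (latticeIdeal K L).radical := by
      rw [hrad]
      exact Ideal.le_radical (Ideal.subset_span (Set.mem_range_self i))
    exact main_claim a rvec L hA hr0 hray hrinj hspan (𝔼 j) (hE2 j) (F i) hFrad
      (fun N hN => hcon i N hN)
  have hzero : (phiS K a Kτ B)^e2 = 0 := by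
    rw [← map_pow, ← hg, map_sum]
    refine Finset.sum_eq_zero fun i _ => ?_
    rw [map_mul, hφF i, mul_zero]
  rw [hφB, AddMonoidAlgebra.single_pow, one_pow] at hzero
  exact one_ne_zero (AddMonoidAlgebra.single_eq_zero.mp hzero)
end

section
/- With the notation of the geometric setup: if F ∈ K[x_1,…,x_n] is an L'-homogeneous polynomial, then the simplicial complex D_{L'}^{L}(F) is a simplex; that is, the whole vertex set of D_{L'}^{L}(F) is a face of D_{L'}^{L}. -/
open MvPolynomial

/-- Choosing a uniform small `ε`. -/
lemma exists_eps {t : ℕ} (dm e : Fin t → ℚ) (hdm : ∀ i, 0 ≤ dm i) (he : ∀ i, 0 ≤ e i) :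
    ∃ ε : ℚ, 0 < ε ∧ ∀ i, dm i ≠ 0 → ε * e i ≤ dm i / 2 := by
  classical
  set s : Finset ℚ :=
    insert 1 ((Finset.univ.filter (fun i => dm i ≠ 0)).image (fun i => (dm i / 2) / (e i + 1)))
    with hs
  have hne : s.Nonempty := ⟨1, Finset.mem_insert_self _ _⟩
  refine ⟨s.min' hne, ?_, ?_⟩
  · have hmem := Finset.min'_mem s hne
    rcases Finset.mem_insert.mp hmem with h | h
    · rw [h]; norm_num
    · obtain ⟨i, hi, hval⟩ := Finset.mem_image.mp h
      rw [← hval]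
      have hdmi : 0 < dm i := (hdm i).lt_of_ne (Ne.symm (Finset.mem_filter.mp hi).2)
      have hei := he i
      exact div_pos (by linarith) (by linarith)
  · intro i hi
    have hle : s.min' hne ≤ (dm i / 2) / (e i + 1) := by
      refine Finset.min'_le _ _ (Finset.mem_insert_of_mem ?_)
      exact Finset.mem_image_of_mem _ (by simp [hi])
    have hei := he i
    have hdmi : 0 < dm i := (hdm i).lt_of_ne (Ne.symm hi)
    calc s.min' hne * e i ≤ ((dm i / 2) / (e i + 1)) * e i :=
          mul_le_mul_of_nonneg_right hle hei
      _ ≤ dm i / 2 := by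
          rw [div_mul_eq_mul_div, div_le_iff₀ (by linarith)]
          nlinarith

/-- Key convexity lemma: if all the `a i` (with `u i ≠ 0`) lie in `posE r E`, and `posE r E`
is contained in `posE r E'` whenever all those `a i` lie in `posE r E'`, then the positive
combination `∑ u i • a i` lies in the relative interior of `posE r E`. -/
lemma keyA {t m n : ℕ} (r : Fin t → Fin m → ℚ) (E : Finset (Fin t))
    (a : Fin n → Fin m → ℚ) (u : Fin n → ℚ) (hu : ∀ i, 0 ≤ u i)
    (ha : ∀ i, u i ≠ 0 → a i ∈ posE r E)
    (hmin : ∀ E' : Finset (Fin t), (∀ i, u i ≠ 0 → a i ∈ posE r E') →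
      posE r E ⊆ posE r E') :
    (∑ i, u i • a i) ∈ relintE r E := by
  classical
  set x : Fin m → ℚ := ∑ i, u i • a i with hxdef
  set P : (Fin t → ℚ) → Prop :=
    fun d => (∀ i, 0 ≤ d i) ∧ (∀ i ∉ E, d i = 0) ∧ x = ∑ i, d i • r i with hP
  set sp : (Fin t → ℚ) → Finset (Fin t) :=
    fun d => Finset.univ.filter (fun i => d i ≠ 0) with hsp
  -- Step 0: choose representations of the `a i`
  have hch : ∀ i, ∃ e : Fin t → ℚ, (∀ k, 0 ≤ e k) ∧ (∀ k ∉ E, e k = 0) ∧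
      (u i ≠ 0 → a i = ∑ k, e k • r k) := by
    intro i
    by_cases h : u i ≠ 0
    · obtain ⟨e, h1, h2, h3⟩ := ha i h; exact ⟨e, h1, h2, fun _ => h3⟩
    · exact ⟨0, by simp, by simp, fun h' => absurd h' h⟩
  choose e he0 heE herep using hch
  set D : Fin t → ℚ := fun k => ∑ i, u i * e i k with hDdef
  have hD : P D := by
    refine ⟨fun k => Finset.sum_nonneg fun i _ => mul_nonneg (hu i) (he0 i k),
      fun k hk => Finset.sum_eq_zero fun i _ => by rw [heE i k hk, mul_zero], ?_⟩
    calc x = ∑ i, ∑ k, (u i * e i k) • r k := by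
          refine Finset.sum_congr rfl fun i _ => ?_
          by_cases h : u i = 0
          · simp [h]
          · rw [herep i h, Finset.smul_sum]
            exact Finset.sum_congr rfl fun k _ => (mul_smul _ _ _).symm
      _ = ∑ k, ∑ i, (u i * e i k) • r k := Finset.sum_comm
      _ = ∑ k, D k • r k := by
          refine Finset.sum_congr rfl fun k _ => ?_
          rw [hDdef, ← Finset.sum_smul]
  -- Step 2: a representation with maximal support
  have hcne : ((sp D).card) ∈ {c | ∃ d, P d ∧ (sp d).card = c} := ⟨D, hD, rfl⟩
  have hcbdd : BddAbove {c | ∃ d, P d ∧ (sp d).card = c} := by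
    refine ⟨t, ?_⟩
    rintro c ⟨d, _, rfl⟩
    simpa using (Finset.card_le_card (Finset.filter_subset _ _)).trans (by simp)
  obtain ⟨dm, hdm, hdmcard⟩ :
      ∃ d, P d ∧ (sp d).card = sSup {c | ∃ d, P d ∧ (sp d).card = c} :=
    Nat.sSup_mem ⟨_, hcne⟩ hcbdd
  -- Step 3: every representation has support inside `sp dm`
  have hsub : ∀ d, P d → sp d ⊆ sp dm := by
    intro d hd
    have hP2 : P (fun i => (dm i + d i) / 2) := by
      refine ⟨fun i => by have := hdm.1 i; have := hd.1 i; positivity,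
        fun i hi => by show (dm i + d i) / 2 = 0; rw [hdm.2.1 i hi, hd.2.1 i hi]; norm_num, ?_⟩
      have hsum : ∑ i, ((dm i + d i) / 2) • r i
          = (2:ℚ)⁻¹ • (∑ i, dm i • r i + ∑ i, d i • r i) := by
        rw [smul_add, Finset.smul_sum, Finset.smul_sum, ← Finset.sum_add_distrib]
        refine Finset.sum_congr rfl fun i _ => ?_
        rw [← smul_add, ← add_smul, div_eq_inv_mul, mul_smul]
      rw [hsum, ← hdm.2.2, ← hd.2.2]
      rw [← two_smul ℚ x, smul_smul]
      norm_num
    have hle : (sp fun i => (dm i + d i) / 2).card ≤ (sp dm).card := by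
      rw [hdmcard]; exact le_csSup hcbdd ⟨_, hP2, rfl⟩
    have hsupp : (sp fun i => (dm i + d i) / 2) = sp dm ∪ sp d := by
      ext i
      simp only [hsp, Finset.mem_filter, Finset.mem_union, Finset.mem_univ, true_and]
      have h1 := hdm.1 i; have h2 := hd.1 i
      constructor
      · intro h
        by_contra hc
        push_neg at hc
        exact h (by simp [hc.1, hc.2])
      · intro h
        have hpos : 0 < dm i + d i := by
          rcases h with h | h
          · have := h1.lt_of_ne (Ne.symm h); linarith
          · have := h2.lt_of_ne (Ne.symm h); linarith
        exact (by linarith : (0:ℚ) < (dm i + d i) / 2).ne'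
    have heq : sp dm ∪ sp d = sp dm := by
      refine (Finset.eq_of_subset_of_card_le Finset.subset_union_left ?_).symm
      rw [← hsupp]; exact hle
    rw [← heq]; exact Finset.subset_union_right
  -- Step 4: each `a i` lies in `posE r (sp dm)`
  have haE' : ∀ i, u i ≠ 0 → a i ∈ posE r (sp dm) := by
    intro i hi
    refine ⟨e i, he0 i, ?_, herep i hi⟩
    intro k hk
    by_contra hek
    have hDk : D k ≠ 0 := by
      have h1 : 0 < u i * e i k :=
        mul_pos ((hu i).lt_of_ne (Ne.symm hi)) ((he0 i k).lt_of_ne (Ne.symm hek))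
      have h2 : u i * e i k ≤ D k :=
        Finset.single_le_sum (f := fun j => u j * e j k)
          (fun j _ => mul_nonneg (hu j) (he0 j k)) (Finset.mem_univ i)
      exact (h1.trans_le h2).ne'
    exact hk (hsub D hD (by simp [hsp, hDk]))
  have hposE' : posE r E ⊆ posE r (sp dm) := hmin _ haE'
  -- Step 5: `E ⊆ sp dm`
  have hEsub : ∀ k ∈ E, k ∈ sp dm := by
    intro k hk
    by_contra hk'
    have hrk : r k ∈ posE r E := by
      refine ⟨fun i => if i = k then 1 else 0, fun i => by positivity, ?_, ?_⟩
      · intro i hi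
        simp only [ite_eq_right_iff]
        rintro rfl; exact absurd hk hi
      · simp [ite_smul]
    obtain ⟨ev, hev1, hev2, hev3⟩ := hposE' hrk
    have hdm0 : ∀ i, dm i = 0 → ev i = 0 := by
      intro i hi
      exact hev2 i (by simp [hsp, hi])
    obtain ⟨ε, hε0, hεb⟩ := exists_eps dm ev hdm.1 hev1
    set d' : Fin t → ℚ := fun i => dm i - ε * ev i + (if i = k then ε else 0) with hd'
    have hd'pos : ∀ i, dm i ≠ 0 → 0 < d' i := by
      intro i hi
      have h1 : ε * ev i ≤ dm i / 2 := hεb i hi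
      have h2 : 0 < dm i := (hdm.1 i).lt_of_ne (Ne.symm hi)
      have h3 : (0:ℚ) ≤ if i = k then ε else 0 := by
        split
        · exact hε0.le
        · exact le_refl 0
      show 0 < dm i - ε * ev i + (if i = k then ε else 0)
      linarith
    have hPd' : P d' := by
      refine ⟨?_, ?_, ?_⟩
      · intro i
        by_cases hi : dm i = 0
        · show 0 ≤ dm i - ε * ev i + (if i = k then ε else 0)
          rw [hi, hdm0 i hi]
          split
          · simpa using hε0.le
          · simp
        · exact (hd'pos i hi).le
      · intro i hiE
        have h0 : dm i = 0 := hdm.2.1 i hiE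
        have hik : i ≠ k := fun h => hiE (h ▸ hk)
        show dm i - ε * ev i + (if i = k then ε else 0) = 0
        rw [h0, hdm0 i h0, if_neg hik]
        ring
      · calc x = (∑ i, dm i • r i) - ε • (∑ i, ev i • r i) + ε • r k := by
              rw [← hdm.2.2, ← hev3]; abel
          _ = ∑ i, (dm i • r i - ε • (ev i • r i) + (if i = k then ε • r i else 0)) := by
              rw [Finset.sum_add_distrib, Finset.sum_sub_distrib, Finset.smul_sum]
              congr 1
              simp [Finset.sum_ite_eq']
          _ = ∑ i, d' i • r i := by
              refine Finset.sum_congr rfl fun i _ => ?_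
              show _ = (dm i - ε * ev i + (if i = k then ε else 0)) • r i
              rw [add_smul, sub_smul, mul_smul, ite_smul, zero_smul]
    have hkmem : k ∈ sp d' := by
      have hdmk : dm k = 0 := by
        by_contra hc
        exact hk' (by simp [hsp, hc])
      have hevk : ev k = 0 := hdm0 k hdmk
      have : d' k = ε := by
        show dm k - ε * ev k + (if k = k then ε else 0) = ε
        rw [hdmk, hevk, if_pos rfl]; ring
      simp [hsp, this, hε0.ne']
    exact hk' (hsub d' hPd' hkmem)
  -- Conclusion
  refine ⟨dm, ?_, hdm.2.1, hdm.2.2⟩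
  intro i hi
  have : dm i ≠ 0 := by
    have := hEsub i hi
    simpa [hsp] using this
  exact (hdm.1 i).lt_of_ne (Ne.symm this)

/-- if `F` is `L'`-homogeneous then `D_{L'}^L(F)` is a simplex:
its whole vertex set is a face of `D_{L'}^L`. -/
theorem stmt15 {K : Type*} [Field K] {n m t f r' : ℕ}
    (L L' : AddSubgroup (Fin n → ℤ))
    (hLpos : ∀ u ∈ L, (∀ i, 0 ≤ u i) → u = (0 : Fin n → ℤ))
    (hLL' : L ≤ L')
    (a : Fin n → Fin m → ℤ)
    (hA : ∀ u : Fin n → ℤ, u ∈ satSet L ↔ ∑ i, u i • a i = 0)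
    (b : Fin n → Fin r' → ℤ)
    (hB : ∀ u : Fin n → ℤ, u ∈ satSet L' ↔ ∑ i, u i • b i = 0)
    (rvec : Fin t → Fin m → ℤ)
    (hr0 : ∀ i, castQ rvec i ≠ 0)
    (hray : ∀ i, IsFaceOf (posQ (castQ a)) (rayOf (castQ rvec i)))
    (hrinj : ∀ i j : Fin t, rayOf (castQ rvec i) = rayOf (castQ rvec j) → i = j)
    (hspan : posQ (castQ a) = posQ (castQ rvec))
    (𝔼 : Fin f → Finset (Fin t))
    (hE1 : ∀ j : Fin f, ¬ IsFaceOf (posQ (castQ a)) (posE (castQ rvec) (𝔼 j)))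
    (hE2 : ∀ (j : Fin f) (E : Finset (Fin t)),
      ¬ IsFaceOf (posQ (castQ a)) (posE (castQ rvec) E) →
      posE (castQ rvec) E ⊆ posE (castQ rvec) (𝔼 j) →
      posE (castQ rvec) E = posE (castQ rvec) (𝔼 j))
    (hE3 : ∀ E : Finset (Fin t), ¬ IsFaceOf (posQ (castQ a)) (posE (castQ rvec) E) →
      ∃ j : Fin f, posE (castQ rvec) (𝔼 j) ⊆ posE (castQ rvec) E)
    (hEinj : ∀ j k : Fin f, posE (castQ rvec) (𝔼 j) = posE (castQ rvec) (𝔼 k) → j = k)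
    (π : (Fin m → ℚ) →ₗ[ℚ] (Fin r' → ℚ))
    (hπ : ∀ i, π (castQ a i) = castQ b i)
    (F : MvPolynomial (Fin n) K) (hF : IsLHomog (L' : Set (Fin n → ℤ)) F) :
    DFace (fun i => π (castQ rvec i)) 𝔼
      {j : Fin f | ∃ u ∈ F.support,
        coneOf (castQ a) (castQ rvec) u = posE (castQ rvec) (𝔼 j)} := by
  classical
  -- For each monomial with cone `σ(𝔼 j)`, the point `∑ uᵢ aᵢ` is in `relint σ(𝔼 j)`.
  have key : ∀ (u : Fin n →₀ ℕ) (j : Fin f),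
      coneOf (castQ a) (castQ rvec) u = posE (castQ rvec) (𝔼 j) →
      (∑ i, ((u i : ℚ)) • castQ a i) ∈ relintE (castQ rvec) (𝔼 j) := by
    intro u j hcone
    apply keyA
    · intro i; exact_mod_cast Nat.zero_le (u i)
    · intro i hi
      have hiu : i ∈ u.support := Finsupp.mem_support_iff.mpr (by exact_mod_cast hi)
      have hmem : castQ a i ∈ coneOf (castQ a) (castQ rvec) u :=
        Set.mem_iInter₂.mpr fun E hE => hE i hiu
      rw [hcone] at hmem; exact hmem
    · intro E' hE'
      have hmem : E' ∈ {E : Finset (Fin t) | ∀ i ∈ u.support, castQ a i ∈ posE (castQ rvec) E} :=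
        fun i hi => hE' i (by exact_mod_cast Finsupp.mem_support_iff.mp hi)
      rw [← hcone]
      exact Set.biInter_subset_of_mem hmem
  -- By `L'`-homogeneity, `π (∑ uᵢ aᵢ)` is the same for all monomials of `F`.
  have hwd : ∀ u ∈ F.support, ∀ v ∈ F.support,
      π (∑ i, ((u i : ℚ)) • castQ a i) = π (∑ i, ((v i : ℚ)) • castQ a i) := by
    intro u hu v hv
    have hl : (fun j => ((u j : ℤ) - (v j : ℤ))) ∈ (L' : Set (Fin n → ℤ)) := hF u hu v hv
    have hs : (fun j => ((u j : ℤ) - (v j : ℤ))) ∈ satSet L' := ⟨1, one_ne_zero, by simpa using hl⟩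
    have hb0 := (hB _).mp hs
    have hq : ∑ i, ((u i : ℚ)) • castQ b i = ∑ i, ((v i : ℚ)) • castQ b i := by
      rw [← sub_eq_zero, ← Finset.sum_sub_distrib]
      funext j'
      have hcoord := congrFun hb0 j'
      simp only [Finset.sum_apply, Pi.smul_apply, smul_eq_mul, Pi.zero_apply] at hcoord
      have : ((∑ i, ((u i : ℤ) - (v i : ℤ)) * b i j' : ℤ) : ℚ) = 0 := by rw [hcoord]; norm_num
      push_cast at this
      simp only [Finset.sum_apply, Pi.sub_apply, Pi.smul_apply, smul_eq_mul, Pi.zero_apply,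
        castQ]
      rw [← this]
      refine Finset.sum_congr rfl fun i _ => ?_
      ring
    calc π (∑ i, ((u i : ℚ)) • castQ a i) = ∑ i, ((u i : ℚ)) • castQ b i := by
          rw [map_sum]
          exact Finset.sum_congr rfl fun i _ => by rw [map_smul, hπ]
      _ = ∑ i, ((v i : ℚ)) • castQ b i := hq
      _ = π (∑ i, ((v i : ℚ)) • castQ a i) := by
          rw [map_sum]
          exact (Finset.sum_congr rfl fun i _ => by rw [map_smul, hπ]).symm
  rcases Set.eq_empty_or_nonempty {j : Fin f | ∃ u ∈ F.support,
      coneOf (castQ a) (castQ rvec) u = posE (castQ rvec) (𝔼 j)} with hTe | hTne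
  · show (⋂ j ∈ _, _).Nonempty
    rw [hTe]
    simp only [Set.mem_empty_iff_false, Set.iInter_of_empty, Set.iInter_univ]
    exact ⟨0, Set.mem_univ 0⟩
  · obtain ⟨j0, u0, hu0F, hu0c⟩ := hTne
    refine ⟨π (∑ i, ((u0 i : ℚ)) • castQ a i), Set.mem_iInter₂.mpr ?_⟩
    rintro j ⟨u, huF, huc⟩
    obtain ⟨d, hd1, hd2, hd3⟩ := key u j huc
    rw [hwd u0 hu0F u huF]
    refine ⟨d, hd1, hd2, ?_⟩
    rw [hd3, map_sum]
    exact Finset.sum_congr rfl fun i _ => by rw [map_smul]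
end
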